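/- arXiv:0907.3254 — 5 statements merged into one kernel-verified Lean document; each statement's English description precedes it below -/
import Mathlib

section
/- Let n ≥ 1 and let a = (a_1,…,a_n) be a sequence of integers with a_1 + ⋯ + a_n = 1. For 0 ≤ i ≤ n−1 let σ^i(a) = (a_{i+1},…,a_n,a_1,…,a_i) denote the i-th cyclic shift of a, and for a sequence b of length n let N(b) be the number of indices m with 0 ≤ m ≤ n−1 such that b_1 + ⋯ + b_m ≤ 0 (the empty sum for m = 0 counts as 0 and is nonpositive). Then for each k with 1 ≤ k ≤ n there is exactly one index i with 0 ≤ i ≤ n−1 such that N(σ^i(a)) = k. -/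
open Finset

/-- The sum of the first `m` entries of a sequence `p` of length `N`. -/
def psum {N : ℕ} (p : Fin N → ℤ) (m : ℕ) : ℤ :=
  ∑ j ∈ Finset.univ.filter (fun j : Fin N => (j : ℕ) < m), p j

lemma psum_zero {n : ℕ} (p : Fin n → ℤ) : psum p 0 = 0 := by
  simp [psum]

lemma psum_succ {n : ℕ} (p : Fin n → ℤ) {m : ℕ} (h : m < n) :
    psum p (m + 1) = psum p m + p ⟨m, h⟩ := by
  unfold psum
  have : Finset.univ.filter (fun j : Fin n => (j : ℕ) < m + 1)
      = insert (⟨m, h⟩ : Fin n) (Finset.univ.filter (fun j : Fin n => (j : ℕ) < m)) := by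
    ext j
    simp [Fin.ext_iff]
    omega
  rw [this, Finset.sum_insert (by simp), add_comm]

lemma psum_n {n : ℕ} (p : Fin n → ℤ) : psum p n = ∑ i, p i := by
  unfold psum
  congr 1
  apply Finset.filter_true_of_mem
  intro j _
  exact j.isLt

def Gfun (n : ℕ) (a : Fin n → ℤ) (t : ℕ) : ℤ := psum a (t % n) + (t / n : ℕ)

lemma Gfun_succ {n : ℕ} (hn : 0 < n) (a : Fin n → ℤ) (ha : ∑ i, a i = 1) (t : ℕ) :
    Gfun n a (t + 1) = Gfun n a t + a ⟨t % n, Nat.mod_lt _ hn⟩ := by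
  obtain ⟨q, r, hr, rfl⟩ : ∃ q r, r < n ∧ t = n * q + r :=
    ⟨t / n, t % n, Nat.mod_lt _ hn, (Nat.div_add_mod t n).symm⟩
  have hmod : (n * q + r) % n = r := by simp [Nat.mul_add_mod, Nat.mod_eq_of_lt hr]
  have hdiv : (n * q + r) / n = q := by
    rw [Nat.mul_add_div hn, Nat.div_eq_of_lt hr, add_zero]
  rcases Nat.lt_or_ge (r + 1) n with h | h
  · have hmod' : (n * q + r + 1) % n = r + 1 := by
      rw [add_assoc, Nat.mul_add_mod, Nat.mod_eq_of_lt h]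
    have hdiv' : (n * q + r + 1) / n = q := by
      rw [add_assoc, Nat.mul_add_div hn, Nat.div_eq_of_lt h, add_zero]
    simp only [Gfun, hmod, hdiv, hmod', hdiv']
    rw [psum_succ a hr]
    push_cast
    ring
  · have hr' : r + 1 = n := by omega
    have hmod' : (n * q + r + 1) % n = 0 := by
      rw [add_assoc, hr', ← Nat.mul_succ, Nat.mul_mod_right]
    have hdiv' : (n * q + r + 1) / n = q + 1 := by
      rw [add_assoc, hr', ← Nat.mul_succ, Nat.mul_div_cancel_left _ hn]
    simp only [Gfun, hmod, hdiv, hmod', hdiv', psum_zero]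
    have := psum_succ a hr
    rw [hr', psum_n, ha] at this
    push_cast
    linarith

lemma psum_shift {n : ℕ} (hn : 0 < n) (a : Fin n → ℤ) (ha : ∑ i, a i = 1)
    (i : Fin n) : ∀ m, m ≤ n →
    psum (fun j : Fin n => a (j + i)) m = Gfun n a (i.val + m) - Gfun n a i.val := by
  intro m
  induction m with
  | zero => intro _; simp [psum_zero]
  | succ m ih =>
    intro hm
    have hm' : m < n := by omega
    rw [psum_succ _ hm', ih (le_of_lt hm'), ← add_assoc, Gfun_succ hn a ha]
    have : ((⟨m, hm'⟩ : Fin n) + i) = ⟨(i.val + m) % n, Nat.mod_lt _ hn⟩ := by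
      rw [Fin.add_def]
      congr 1
      simp [Nat.add_comm]
    rw [this]
    ring

lemma rank_bij {n : ℕ} (f : Fin n → ℤ) (hf : Function.Injective f)
    (k : ℕ) (hk1 : 1 ≤ k) (hk2 : k ≤ n) :
    ∃! i : Fin n, (univ.filter fun t => f t ≤ f i).card = k := by
  set r : Fin n → ℕ := fun i => (univ.filter fun t => f t ≤ f i).card with hr
  have hinj : Function.Injective r := by
    intro i j hij
    by_contra hne
    have hfne : f i ≠ f j := fun h => hne (hf h)
    wlog hlt : f i < f j generalizing i j
    · exact this hij.symm (Ne.symm hne) hfne.symm (by cases lt_or_gt_of_ne hfne with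
        | inl h => exact absurd h hlt
        | inr h => exact h)
    have hss : (univ.filter fun t => f t ≤ f i) ⊂ (univ.filter fun t => f t ≤ f j) := by
      constructor
      · intro t ht
        simp only [mem_filter] at ht ⊢
        exact ⟨ht.1, le_trans ht.2 (le_of_lt hlt)⟩
      · intro hsub
        have : j ∈ (univ.filter fun t => f t ≤ f i) := hsub (by simp)
        simp only [mem_filter] at this
        exact absurd this.2 (not_le.mpr hlt)
    exact absurd hij (Nat.ne_of_lt (Finset.card_lt_card hss))
  have hmem : ∀ i, r i ∈ Finset.Icc 1 n := by
    intro i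
    simp only [Finset.mem_Icc]
    constructor
    · exact Finset.card_pos.mpr ⟨i, by simp⟩
    · exact le_trans (Finset.card_filter_le _ _) (by simp)
  have himg : Finset.univ.image r = Finset.Icc 1 n := by
    apply Finset.eq_of_subset_of_card_le
    · intro x hx
      simp only [Finset.mem_image] at hx
      obtain ⟨i, _, rfl⟩ := hx
      exact hmem i
    · rw [Nat.card_Icc, Finset.card_image_of_injective _ hinj]
      simp
  have hk : k ∈ Finset.univ.image r := by
    rw [himg]; simp only [Finset.mem_Icc]; exact ⟨hk1, hk2⟩
  simp only [Finset.mem_image] at hk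
  obtain ⟨i, _, hi⟩ := hk
  exact ⟨i, hi, fun j hj => hinj (hj.trans hi.symm)⟩


def keyf (n : ℕ) (a : Fin n → ℤ) (t : Fin n) : ℤ :=
  ((n : ℤ) + 1) * psum a t.val + ((n : ℤ) - t.val)
lemma keyf_le {n : ℕ} (a : Fin n → ℤ) (t i : Fin n) :
    keyf n a t ≤ keyf n a i ↔
      (psum a t.val < psum a i.val ∨ (psum a t.val = psum a i.val ∧ i.val ≤ t.val)) := by
  have ht1 : (1 : ℤ) ≤ (n : ℤ) - t.val := by
    have := t.isLt; omega
  have ht2 : (n : ℤ) - t.val ≤ n := by have := t.pos; omega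
  have hi1 : (1 : ℤ) ≤ (n : ℤ) - i.val := by have := i.isLt; omega
  have hi2 : (n : ℤ) - i.val ≤ n := by omega
  unfold keyf
  rcases lt_trichotomy (psum a t.val) (psum a i.val) with h | h | h
  · have hmul : ((n : ℤ) + 1) * psum a t.val ≤ ((n : ℤ) + 1) * (psum a i.val - 1) :=
      mul_le_mul_of_nonneg_left (by omega) (by positivity)
    constructor
    · intro _; exact Or.inl h
    · intro _; nlinarith
  · rw [h]
    constructor
    · intro hle
      right
      exact ⟨rfl, by omega⟩
    · intro hc
      rcases hc with hlt | ⟨_, hle⟩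
      · omega
      · omega
  · have hmul : ((n : ℤ) + 1) * (psum a i.val + 1) ≤ ((n : ℤ) + 1) * psum a t.val :=
      mul_le_mul_of_nonneg_left (by omega) (by positivity)
    constructor
    · intro hle; nlinarith
    · intro hc
      rcases hc with hlt | ⟨heq, _⟩
      · omega
      · omega

lemma keyf_inj {n : ℕ} (a : Fin n → ℤ) : Function.Injective (keyf n a) := by
  intro t s h
  have h1 := (keyf_le a t s).mp (le_of_eq h)
  have h2 := (keyf_le a s t).mp (le_of_eq h.symm)
  have : t.val = s.val := by
    rcases h1 with h1 | ⟨e1, l1⟩ <;> rcases h2 with h2 | ⟨e2, l2⟩ <;> omega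
  exact Fin.ext this

lemma Gfun_lt {n : ℕ} (a : Fin n → ℤ) (t : ℕ) (h : t < n) : Gfun n a t = psum a t := by
  unfold Gfun
  rw [Nat.mod_eq_of_lt h, Nat.div_eq_of_lt h]
  simp

lemma cond_iff {n : ℕ} (hn : 0 < n) (a : Fin n → ℤ) (i : Fin n) {m : ℕ} (hm : m < n) :
    Gfun n a (i.val + m) ≤ psum a i.val ↔
      keyf n a (⟨m, hm⟩ + i) ≤ keyf n a i := by
  have hival : ((⟨m, hm⟩ : Fin n) + i).val = (m + i.val) % n := by
    rw [Fin.add_def]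
  rw [keyf_le]
  rcases Nat.lt_or_ge (i.val + m) n with h | h
  · have hv : ((⟨m, hm⟩ : Fin n) + i).val = i.val + m := by
      rw [hival, Nat.mod_eq_of_lt (by omega)]; omega
    rw [Gfun_lt a _ h, hv]
    constructor
    · intro hle
      rcases lt_or_eq_of_le hle with h' | h'
      · exact Or.inl h'
      · exact Or.inr ⟨h', by omega⟩
    · intro hc
      rcases hc with h' | ⟨h', _⟩
      · exact le_of_lt h'
      · exact le_of_eq h'
  · have hv : ((⟨m, hm⟩ : Fin n) + i).val = i.val + m - n := by
      rw [hival, Nat.mod_eq_sub_mod (by omega), Nat.mod_eq_of_lt (by omega)]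
      omega
    have hG : Gfun n a (i.val + m) = psum a (i.val + m - n) + 1 := by
      unfold Gfun
      rw [Nat.mod_eq_sub_mod (by omega), Nat.mod_eq_of_lt (by omega)]
      have h2n : i.val + m < 2 * n := by have := i.isLt; omega
      have hd : (i.val + m) / n = 1 := Nat.div_eq_of_lt_le (by omega) (by omega)
      rw [hd]
      simp
    rw [hG, hv]
    have htlt : i.val + m - n < i.val := by omega
    constructor
    · intro hle; exact Or.inl (by omega)
    · intro hc
      rcases hc with h' | ⟨_, h'⟩
      · omega
      · omega

/-- Cycle lemma: for a sequence of `n` integers summing to `1` and any `1 ≤ k ≤ n`,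
exactly one cyclic shift has exactly `k` nonpositive partial sums (among the partial
sums `b_1 + ⋯ + b_m` for `0 ≤ m ≤ n-1`). -/
theorem cycle_lemma (n : ℕ) (hn : 1 ≤ n) (a : Fin n → ℤ) (ha : ∑ i, a i = 1)
    (k : ℕ) (hk1 : 1 ≤ k) (hk2 : k ≤ n) :
    ∃! i : Fin n,
      (((Finset.range n).filter (fun m =>
        psum (fun j : Fin n => a (j + i)) m ≤ 0)).card) = k := by
  obtain ⟨n, rfl⟩ : ∃ m, n = m + 1 := ⟨n - 1, by omega⟩
  have hn0 : 0 < n + 1 := Nat.succ_pos n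
  have hcard : ∀ i : Fin (n + 1),
      (((Finset.range (n + 1)).filter (fun m =>
        psum (fun j : Fin (n + 1) => a (j + i)) m ≤ 0)).card)
      = (univ.filter fun t => keyf (n + 1) a t ≤ keyf (n + 1) a i).card := by
    intro i
    have hGi : Gfun (n + 1) a i.val = psum a i.val := Gfun_lt a _ i.isLt
    have hiff : ∀ m (hm : m < n + 1),
        (psum (fun j : Fin (n + 1) => a (j + i)) m ≤ 0 ↔
          keyf (n + 1) a (⟨m, hm⟩ + i) ≤ keyf (n + 1) a i) := by
      intro m hm
      rw [psum_shift hn0 a ha i m (le_of_lt hm), hGi, sub_nonpos]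
      exact cond_iff hn0 a i hm
    apply Finset.card_bij
      (fun m hm => (⟨m, Finset.mem_range.mp (Finset.mem_filter.mp hm).1⟩ : Fin (n + 1)) + i)
    · intro m hm
      have h1 := Finset.mem_filter.mp hm
      have hmn := Finset.mem_range.mp h1.1
      simp only [Finset.mem_filter, Finset.mem_univ, true_and]
      exact (hiff m hmn).mp h1.2
    · intro m1 h1 m2 h2 heq
      have := add_right_cancel heq
      exact Fin.mk.inj_iff.mp this
    · intro t ht
      have h1 := (Finset.mem_filter.mp ht).2
      have hteq : (⟨(t - i).val, (t - i).isLt⟩ : Fin (n + 1)) + i = t := by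
        simp only [Fin.eta]
        exact sub_add_cancel t i
      refine ⟨(t - i).val, ?_, hteq⟩
      rw [Finset.mem_filter, Finset.mem_range]
      exact ⟨(t - i).isLt, (hiff _ (t - i).isLt).mpr (by rw [hteq]; exact h1)⟩
  obtain ⟨i, hi, huniq⟩ := rank_bij (keyf (n + 1) a) (keyf_inj a) k hk1 hk2
  exact ⟨i, (hcard i).trans hi, fun j hj => huniq j ((hcard j).symm.trans hj)⟩
end

section
/- Let n ≥ 0. For each k with 1 ≤ k ≤ n+1, the number of paths p in 𝒫(n,1,1) with p_1 = +1 such that exactly k up steps of p start on or below the x-axis equals (1/(n+1))·C(2n,n) (the n-th Catalan number). -/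
open Finset

namespace CF

def ext (n : ℕ) (w : Fin (2*n+1) → ℤ) (t : ℕ) : ℤ :=
  w ⟨t % (2*n+1), Nat.mod_lt _ (by omega)⟩

def ht (n : ℕ) (w : Fin (2*n+1) → ℤ) (a : ℕ) : ℤ := ∑ t ∈ Finset.range a, ext n w t

def rot {n : ℕ} (j : Fin (2*n+1)) (w : Fin (2*n+1) → ℤ) : Fin (2*n+1) → ℤ :=
  fun i => w (i + j)

def K (n : ℕ) (w : Fin (2*n+1) → ℤ) (i : Fin (2*n+1)) : ℤ :=
  ht n w (i : ℕ) * (2*(n:ℤ)+2) + ((2*(n:ℤ)+1) - (i : ℕ))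

variable {n : ℕ} {w : Fin (2*n+1) → ℤ}


lemma ext_eq (i : Fin (2*n+1)) : ext n w (i : ℕ) = w i := by
  unfold ext; congr 1; exact Fin.ext (Nat.mod_eq_of_lt i.isLt)

lemma ext_period (t : ℕ) : ext n w (t + (2*n+1)) = ext n w t := by
  unfold ext; congr 1; exact Fin.ext (by simp [Nat.add_mod_right])

lemma ht_succ (a : ℕ) : ht n w (a+1) = ht n w a + ext n w a :=
  Finset.sum_range_succ _ _

lemma sum_one (hpm : ∀ i, w i = 1 ∨ w i = -1)
    (hup : (univ.filter (fun i => w i = 1)).card = n + 1) :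
    ∑ i, w i = 1 := by
  classical
  rw [← Finset.sum_filter_add_sum_filter_not univ (fun i => w i = 1)]
  have h1 : ∑ i ∈ univ.filter (fun i => w i = 1), w i = (n+1 : ℤ) := by
    rw [Finset.sum_congr rfl (fun i hi => (Finset.mem_filter.mp hi).2)]
    simp [hup]
  have hc : (univ.filter (fun i => ¬ w i = 1)).card = n := by
    have := Finset.card_filter_add_card_filter_not
      (s := (univ : Finset (Fin (2*n+1)))) (p := fun i => w i = 1)
    simp only [Finset.card_univ, Fintype.card_fin] at this
    omega
  have h2 : ∑ i ∈ univ.filter (fun i => ¬ w i = 1), w i = -(n : ℤ) := by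
    calc ∑ i ∈ univ.filter (fun i => ¬ w i = 1), w i
        = ∑ _i ∈ univ.filter (fun i => ¬ w i = 1), (-1 : ℤ) := by
          refine Finset.sum_congr rfl (fun i hi => ?_)
          rcases hpm i with h | h
          · exact absurd h (Finset.mem_filter.mp hi).2
          · exact h
      _ = -(n : ℤ) := by simp [hc]
  rw [h1, h2]; ring

lemma ht_period (hpm : ∀ i, w i = 1 ∨ w i = -1)
    (hup : (univ.filter (fun i => w i = 1)).card = n + 1) (a : ℕ) :
    ht n w (a + (2*n+1)) = ht n w a + 1 := by
  induction a with
  | zero =>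
    have : ht n w (2*n+1) = ∑ i, w i := by
      unfold ht
      rw [← Fin.sum_univ_eq_sum_range]
      exact Finset.sum_congr rfl (fun i _ => ext_eq i)
    simp only [Nat.zero_add, this, sum_one hpm hup]
    unfold ht; simp
  | succ a ih =>
    have : a + 1 + (2*n+1) = (a + (2*n+1)) + 1 := by omega
    rw [this, ht_succ, ih, ext_period, ht_succ]; ring



lemma psum_eq {m : ℕ} (hm : m ≤ 2*n+1) (p : Fin (2*n+1) → ℤ) :
    psum p m = ∑ t ∈ Finset.range m, ext n p t := by
  unfold psum
  refine Finset.sum_nbij' (fun i => (i : ℕ)) (fun t => ⟨t % (2*n+1), Nat.mod_lt _ (by omega)⟩)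
    ?_ ?_ ?_ ?_ ?_
  · intro i hi; simp only [Finset.mem_filter] at hi; exact Finset.mem_range.mpr hi.2
  · intro t ht; simp only [Finset.mem_range] at ht
    simp only [Finset.mem_filter, Finset.mem_univ, true_and]
    simpa [Nat.mod_eq_of_lt (lt_of_lt_of_le ht hm)] using ht
  · intro i hi; exact Fin.ext (by simp [Nat.mod_eq_of_lt i.isLt])
  · intro t ht; simp only [Finset.mem_range] at ht
    simp [Nat.mod_eq_of_lt (lt_of_lt_of_le ht hm)]
  · intro i hi; rw [ext_eq]

-- rotation entry in terms of ext
lemma rot_apply (j : Fin (2*n+1)) (i : Fin (2*n+1)) :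
    rot j w i = ext n w ((i : ℕ) + (j : ℕ)) := by
  unfold rot ext; congr 1

lemma ext_rot (j : Fin (2*n+1)) (t : ℕ) :
    ext n (rot j w) t = ext n w (t + (j : ℕ)) := by
  rw [show ext n (rot j w) t = rot j w ⟨t % (2*n+1), Nat.mod_lt _ (by omega)⟩ from rfl,
    rot_apply]
  unfold ext; congr 1
  exact Fin.ext (by simp [Nat.add_mod, Nat.mod_mod_of_dvd])

lemma ht_sub (a m : ℕ) : ht n w (a + m) - ht n w a = ∑ t ∈ Finset.range m, ext n w (a + t) := by
  induction m with
  | zero => simp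
  | succ m ih =>
    rw [show a + (m+1) = (a+m)+1 from rfl, Finset.sum_range_succ, ← ih]
    unfold ht; rw [Finset.sum_range_succ]; ring

lemma psum_rot (j : Fin (2*n+1)) {m : ℕ} (hm : m ≤ 2*n+1) :
    psum (rot j w) m = ht n w ((j:ℕ) + m) - ht n w (j:ℕ) := by
  rw [psum_eq hm, ht_sub]
  refine Finset.sum_congr rfl (fun t _ => ?_)
  rw [ext_rot]; ring_nf


-- generic lexicographic comparison
lemma lex_le {M a b ra rb : ℤ} (hra : 1 ≤ ra) (hra' : ra < M) (hrb : 1 ≤ rb) (hrb' : rb < M) :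
    a * M + ra ≤ b * M + rb ↔ (a < b ∨ (a = b ∧ ra ≤ rb)) := by
  constructor
  · intro h
    rcases lt_trichotomy a b with h1 | h1 | h1
    · exact Or.inl h1
    · exact Or.inr ⟨h1, by rw [h1] at h; linarith⟩
    · exfalso
      have h2 : (b + 1) * M ≤ a * M :=
        mul_le_mul_of_nonneg_right (by linarith) (by linarith)
      nlinarith
  · rintro (h | ⟨h1, h2⟩)
    · have h2 : (a + 1) * M ≤ b * M :=
        mul_le_mul_of_nonneg_right (by linarith) (by linarith)
      nlinarith
    · rw [h1]; linarith

lemma rbound (i : Fin (2*n+1)) : 1 ≤ (2*(n:ℤ)+1) - (i:ℕ) ∧ (2*(n:ℤ)+1) - (i:ℕ) < 2*(n:ℤ)+2 := by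
  have := i.isLt
  constructor <;> [skip; skip] <;> push_cast <;> omega

lemma K_le_iff (i j : Fin (2*n+1)) :
    K n w i ≤ K n w j ↔
      (ht n w (i:ℕ) < ht n w (j:ℕ) ∨
        (ht n w (i:ℕ) = ht n w (j:ℕ) ∧ (j:ℕ) ≤ (i:ℕ))) := by
  obtain ⟨h1, h2⟩ := rbound (n := n) i
  obtain ⟨h3, h4⟩ := rbound (n := n) j
  unfold K
  rw [lex_le h1 h2 h3 h4]
  have hiv := i.isLt; have hjv := j.isLt
  constructor
  · rintro (h | ⟨h, h'⟩)
    · exact Or.inl h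
    · exact Or.inr ⟨h, by omega⟩
  · rintro (h | ⟨h, h'⟩)
    · exact Or.inl h
    · exact Or.inr ⟨h, by push_cast; omega⟩

lemma K_inj (i j : Fin (2*n+1)) (h : K n w i = K n w j) : i = j := by
  have h1 := (K_le_iff (w := w) i j).mp h.le
  have h2 := (K_le_iff (w := w) j i).mp h.ge
  refine Fin.ext ?_
  rcases h1 with h1 | ⟨e1, l1⟩ <;> rcases h2 with h2 | ⟨e2, l2⟩ <;>
    first | omega | (exfalso; linarith)

def stat {n : ℕ} (w : Fin (2*n+1) → ℤ) (j : Fin (2*n+1)) : ℕ :=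
  (univ.filter (fun i : Fin (2*n+1) => rot j w i = 1 ∧ psum (rot j w) (i:ℕ) ≤ 0)).card

lemma QP (hpm : ∀ i, w i = 1 ∨ w i = -1)
    (hup : (univ.filter (fun i => w i = 1)).card = n + 1) (j i : Fin (2*n+1)) :
    (rot j w i = 1 ∧ psum (rot j w) (i:ℕ) ≤ 0) ↔
      (w (i+j) = 1 ∧ K n w (i+j) ≤ K n w j) := by
  have hrw : rot j w i = w (i + j) := rfl
  have hm : (i:ℕ) ≤ 2*n+1 := le_of_lt i.isLt
  rw [hrw, psum_rot j hm, and_congr_right_iff]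
  intro _
  have hiv := i.isLt; have hjv := j.isLt
  have hadd : ((i+j : Fin (2*n+1)) : ℕ) = ((i:ℕ) + (j:ℕ)) % (2*n+1) := Fin.val_add i j
  by_cases hc : (i:ℕ) + (j:ℕ) < 2*n+1
  · have hv : ((i+j : Fin (2*n+1)) : ℕ) = (i:ℕ) + (j:ℕ) := by
      rw [hadd, Nat.mod_eq_of_lt hc]
    rw [K_le_iff, show (j:ℕ) + (i:ℕ) = ((i+j : Fin (2*n+1)) : ℕ) by omega]
    constructor
    · intro h
      rcases lt_or_eq_of_le (by linarith : ht n w ((i+j : Fin (2*n+1)):ℕ) ≤ ht n w (j:ℕ))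
        with h' | h'
      · exact Or.inl h'
      · exact Or.inr ⟨h', by omega⟩
    · rintro (h | ⟨h, _⟩) <;> linarith
  · have hv : ((i+j : Fin (2*n+1)) : ℕ) = (i:ℕ) + (j:ℕ) - (2*n+1) := by
      rw [hadd, Nat.mod_eq_sub_mod (by omega), Nat.mod_eq_of_lt (by omega)]
    have hper : ht n w ((j:ℕ) + (i:ℕ)) = ht n w ((i+j : Fin (2*n+1)):ℕ) + 1 := by
      rw [show (j:ℕ) + (i:ℕ) = ((i+j : Fin (2*n+1)):ℕ) + (2*n+1) by omega,
        ht_period hpm hup]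
    rw [K_le_iff, hper]
    constructor
    · intro h; exact Or.inl (by linarith)
    · rintro (h | ⟨h, hge⟩)
      · linarith
      · exfalso; omega
  
lemma stat_eq_rank (hpm : ∀ i, w i = 1 ∨ w i = -1)
    (hup : (univ.filter (fun i => w i = 1)).card = n + 1) (j : Fin (2*n+1)) :
    stat w j =
      ((univ.filter (fun i => w i = 1)).filter (fun i => K n w i ≤ K n w j)).card := by
  rw [Finset.filter_filter]
  unfold stat
  refine Finset.card_bij (fun i _ => i + j) ?_ ?_ ?_
  · intro i hi
    simp only [Finset.mem_filter, Finset.mem_univ, true_and] at hi ⊢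
    exact (QP hpm hup j i).mp hi
  · intro i₁ h₁ i₂ h₂ h
    exact add_right_cancel h
  · intro i0 hi0
    simp only [Finset.mem_filter, Finset.mem_univ, true_and] at hi0
    refine ⟨i0 - j, ?_, by simp⟩
    simp only [Finset.mem_filter, Finset.mem_univ, true_and]
    rw [QP hpm hup j (i0 - j), sub_add_cancel]
    exact hi0


lemma rank_bij (s : Finset ℤ) (k : ℕ) (hk1 : 1 ≤ k) (hk2 : k ≤ s.card) :
    ∃! x, x ∈ s ∧ (s.filter (fun y => y ≤ x)).card = k := by
  classical
  have hmono : ∀ x ∈ s, ∀ y ∈ s, x < y →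
      (s.filter (fun z => z ≤ x)).card < (s.filter (fun z => z ≤ y)).card := by
    intro x hx y hy hxy
    refine Finset.card_lt_card ?_
    rw [Finset.ssubset_iff_of_subset
      (fun z hz => by
        simp only [Finset.mem_filter] at hz ⊢
        exact ⟨hz.1, le_trans hz.2 hxy.le⟩)]
    exact ⟨y, Finset.mem_filter.mpr ⟨hy, le_refl y⟩,
      fun hc => absurd (Finset.mem_filter.mp hc).2 (not_le.mpr hxy)⟩
  have huniq : ∀ x ∈ s, ∀ y ∈ s,
      (s.filter (fun z => z ≤ x)).card = (s.filter (fun z => z ≤ y)).card → x = y := by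
    intro x hx y hy h
    rcases lt_trichotomy x y with h' | h' | h'
    · exact absurd h (Nat.ne_of_lt (hmono x hx y hy h'))
    · exact h'
    · exact absurd h.symm (Nat.ne_of_lt (hmono y hy x hx h'))
  have hex := Finset.surj_on_of_inj_on_of_card_le
    (s := s) (t := Finset.Icc 1 s.card)
    (fun x _ => (s.filter (fun z => z ≤ x)).card)
    (fun x hx => Finset.mem_Icc.mpr
      ⟨Finset.card_pos.mpr ⟨x, Finset.mem_filter.mpr ⟨hx, le_refl x⟩⟩,
        Finset.card_le_card (Finset.filter_subset _ _)⟩)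
    (fun x y hx hy h => huniq x hx y hy h)
    (by rw [Nat.card_Icc]; omega)
    k (Finset.mem_Icc.mpr ⟨hk1, hk2⟩)
  obtain ⟨x, hx, hxk⟩ := hex
  exact ⟨x, ⟨hx, hxk.symm⟩,
    fun y hy => huniq y hy.1 x hx (by rw [hy.2, hxk])⟩

lemma exists_unique_rot (hpm : ∀ i, w i = 1 ∨ w i = -1)
    (hup : (univ.filter (fun i => w i = 1)).card = n + 1)
    {k : ℕ} (hk1 : 1 ≤ k) (hk2 : k ≤ n+1) :
    ∃! j : Fin (2*n+1), w j = 1 ∧ stat w j = k := by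
  classical
  set U := univ.filter (fun i => w i = 1) with hUdef
  have hKinj : Function.Injective (K n w) := fun a b => K_inj a b
  set s := U.image (K n w) with hsdef
  have hs : s.card = n + 1 := by
    rw [hsdef, Finset.card_image_of_injective _ hKinj, hup]
  have hrank : ∀ j : Fin (2*n+1), stat w j = (s.filter (fun y => y ≤ K n w j)).card := by
    intro j
    rw [stat_eq_rank hpm hup j, hsdef, Finset.filter_image,
      Finset.card_image_of_injective _ hKinj]
  obtain ⟨x, ⟨hxs, hxk⟩, hxu⟩ := rank_bij s k hk1 (by omega)
  obtain ⟨j, hjU, hjx⟩ := Finset.mem_image.mp hxs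
  refine ⟨j, ⟨(Finset.mem_filter.mp hjU).2, by rw [hrank j, hjx, hxk]⟩, ?_⟩
  rintro j' ⟨hj'1, hj'2⟩
  have hj'U : j' ∈ U := Finset.mem_filter.mpr ⟨Finset.mem_univ _, hj'1⟩
  have hx' : K n w j' = x :=
    hxu _ ⟨Finset.mem_image_of_mem _ hj'U, by rw [← hrank j']; exact hj'2⟩
  exact K_inj j' j (by rw [hx', hjx])


lemma rot_rot (a b : Fin (2*n+1)) : rot a (rot b w) = rot (b + a) w := by
  funext i; show w (i + a + b) = w (i + (b + a)); rw [add_assoc, add_comm a b]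

lemma rot_self_inv (j : Fin (2*n+1)) : rot (-j) (rot j w) = w := by
  rw [rot_rot, add_neg_cancel]; funext i; show w (i + 0) = w i; rw [add_zero]

lemma rot_ups (j : Fin (2*n+1)) :
    (univ.filter (fun i => rot j w i = 1)).card = (univ.filter (fun i => w i = 1)).card := by
  refine Finset.card_bij (fun i _ => i + j) ?_ ?_ ?_
  · intro i hi
    simp only [Finset.mem_filter, Finset.mem_univ, true_and] at hi ⊢
    exact hi
  · intro i₁ _ i₂ _ h; exact add_right_cancel h
  · intro i0 hi0
    simp only [Finset.mem_filter, Finset.mem_univ, true_and] at hi0 ⊢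
    refine ⟨i0 - j, ?_, by rw [sub_add_cancel]⟩
    show w (i0 - j + j) = 1
    rw [sub_add_cancel]; exact hi0

lemma zero_fin_eq : (⟨0, Nat.succ_pos _⟩ : Fin (2*n+1)) = 0 := by
  refine Fin.ext ?_
  simp

def St (n k : ℕ) : Type := {p : Fin (2*n+1) → ℤ //
      (∀ i, p i = 1 ∨ p i = -1) ∧
      (univ.filter (fun i => p i = 1)).card = n + 1 ∧
      p ⟨0, Nat.succ_pos _⟩ = 1 ∧
      (univ.filter (fun i : Fin (2*n+1) => p i = 1 ∧ psum p (i : ℕ) ≤ 0)).card = k }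

def Wt (n : ℕ) : Type := {w : Fin (2*n+1) → ℤ //
      (∀ i, w i = 1 ∨ w i = -1) ∧
      (univ.filter (fun i => w i = 1)).card = n + 1}

variable {k : ℕ}

lemma unique_pred (hW : (∀ i, w i = 1 ∨ w i = -1) ∧
      (univ.filter (fun i => w i = 1)).card = n + 1) (hk1 : 1 ≤ k) (hk2 : k ≤ n+1) :
    ∃! j : Fin (2*n+1), w j = 1 ∧ stat w j = k :=
  exists_unique_rot hW.1 hW.2 hk1 hk2

noncomputable def theEquiv (n k : ℕ) (hk1 : 1 ≤ k) (hk2 : k ≤ n+1) :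
    St n k × Fin (2*n+1) ≃ Wt n where
  toFun := fun pj => ⟨rot pj.2 pj.1.val,
    fun i => pj.1.prop.1 _,
    by rw [rot_ups]; exact pj.1.prop.2.1⟩
  invFun := fun ww =>
    let j₀ := (unique_pred ww.prop hk1 hk2).exists.choose
    have hj₀ := (unique_pred ww.prop hk1 hk2).exists.choose_spec
    (⟨rot j₀ ww.val,
      fun i => ww.prop.1 _,
      by rw [rot_ups]; exact ww.prop.2,
      by rw [zero_fin_eq]; show ww.val (0 + j₀) = 1; rw [zero_add]; exact hj₀.1,
      hj₀.2⟩, -j₀)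
  left_inv := by
    rintro ⟨⟨p, hp1, hp2, hp3, hp4⟩, j⟩
    have hWw : (∀ i, rot j p i = 1 ∨ rot j p i = -1) ∧
        (univ.filter (fun i => rot j p i = 1)).card = n + 1 :=
      ⟨fun i => hp1 _, by rw [rot_ups]; exact hp2⟩
    have hcand : rot j p (-j) = 1 ∧ stat (rot j p) (-j) = k := by
      constructor
      · show p (-j + j) = 1
        rw [neg_add_cancel, ← zero_fin_eq]; exact hp3
      · unfold stat
        rw [rot_self_inv]; exact hp4
    have hj₀ := (unique_pred hWw hk1 hk2).exists.choose_spec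
    have heq : (unique_pred hWw hk1 hk2).exists.choose = -j :=
      (unique_pred hWw hk1 hk2).unique hj₀ hcand
    simp only [heq]
    refine Prod.ext ?_ ?_
    · refine Subtype.ext ?_
      show rot (-j) (rot j p) = p
      exact rot_self_inv j
    · show -(-j) = j
      rw [neg_neg]
  right_inv := by
    rintro ⟨ww, hww⟩
    refine Subtype.ext ?_
    show rot _ (rot _ ww) = ww
    rw [rot_rot, add_neg_cancel]
    funext i; show ww (i + 0) = ww i; rw [add_zero]

noncomputable def wtEquiv (n : ℕ) : Wt n ≃ {s : Finset (Fin (2*n+1)) // s.card = n + 1} where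
  toFun := fun w => ⟨univ.filter (fun i => w.val i = 1), w.prop.2⟩
  invFun := fun s => ⟨fun i => if i ∈ s.val then 1 else -1,
    fun i => by by_cases h : i ∈ s.val <;> simp [h],
    by
      have : univ.filter (fun i => (if i ∈ s.val then (1:ℤ) else -1) = 1) = s.val := by
        ext i
        by_cases h : i ∈ s.val <;> simp [h]
      rw [this, s.prop]⟩
  left_inv := by
    rintro ⟨w, hw1, hw2⟩
    refine Subtype.ext (funext fun i => ?_)
    rcases hw1 i with h | h
    · simp [h]
    · have : ¬ w i = 1 := by rw [h]; decide
      simp [h, this]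
  right_inv := by
    rintro ⟨s, hs⟩
    refine Subtype.ext ?_
    show univ.filter (fun i => (if i ∈ s then (1:ℤ) else -1) = 1) = s
    ext i
    by_cases h : i ∈ s <;> simp [h]

lemma card_Wt (n : ℕ) : Nat.card (Wt n) = (2*n+1).choose (n+1) := by
  rw [Nat.card_congr (wtEquiv n), Nat.card_eq_fintype_card, Fintype.card_finset_len,
    Fintype.card_fin]

lemma card_St (hk1 : 1 ≤ k) (hk2 : k ≤ n+1) :
    Nat.card (St n k) * (2*n+1) = (2*n+1).choose (n+1) := by
  have h := Nat.card_congr (theEquiv n k hk1 hk2)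
  rw [Nat.card_prod, Nat.card_eq_fintype_card (α := Fin (2*n+1)), Fintype.card_fin,
    card_Wt] at h
  exact h


end CF

/-- Among paths in 𝒫(n,1,1) (steps ±1, with n+1 up steps and n down steps) starting
with an up step, for each `1 ≤ k ≤ n+1` the number with exactly `k` up steps
starting on or below the x-axis is `(1/(n+1))·C(2n,n)`. -/
theorem catalan_chung_feller_up (n k : ℕ) (hk1 : 1 ≤ k) (hk2 : k ≤ n + 1) :
    Nat.card {p : Fin (2*n+1) → ℤ //
      (∀ i, p i = 1 ∨ p i = -1) ∧
      (univ.filter (fun i => p i = 1)).card = n + 1 ∧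
      p ⟨0, Nat.succ_pos _⟩ = 1 ∧
      (univ.filter (fun i : Fin (2*n+1) => p i = 1 ∧ psum p (i : ℕ) ≤ 0)).card = k }
      * (n + 1) = Nat.choose (2*n) n := by
  have h : Nat.card (CF.St n k) * (2*n+1) = (2*n+1).choose (n+1) :=
    CF.card_St hk1 hk2
  have hpos : 0 < 2*n+1 := by omega
  have key : (2*n+1) * Nat.choose (2*n) n = Nat.choose (2*n+1) (n+1) * (n+1) :=
    Nat.add_one_mul_choose_eq (2*n) n
  have final : Nat.card (CF.St n k) * (n + 1) = Nat.choose (2*n) n := by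
    refine Nat.eq_of_mul_eq_mul_right hpos ?_
    calc Nat.card (CF.St n k) * (n + 1) * (2*n+1)
        = Nat.card (CF.St n k) * (2*n+1) * (n+1) := by ring
      _ = Nat.choose (2*n+1) (n+1) * (n+1) := by rw [h]
      _ = (2*n+1) * Nat.choose (2*n) n := key.symm
      _ = Nat.choose (2*n) n * (2*n+1) := by ring
  exact final
end

section
/- Let n ≥ 1. For each k with 1 ≤ k ≤ n, the number of paths p in 𝒫(n,1,1) with p_1 = −1 such that exactly k down steps of p start on or below the x-axis equals (1/n)·C(2n,n−1). -/
open Finset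

namespace CFaux

variable {N : ℕ} [NeZero N]

/-- periodic extension -/
def ext (p : Fin N → ℤ) (m : ℕ) : ℤ :=
  p ⟨m % N, Nat.mod_lt m (Nat.pos_of_ne_zero (NeZero.ne N))⟩

/-- heights of the extension -/
def hgt (p : Fin N → ℤ) (m : ℕ) : ℤ := ∑ i ∈ Finset.range m, ext p i

/-- cyclic shift -/
def shf (t : Fin N) (p : Fin N → ℤ) : Fin N → ℤ := fun i => p (i + t)

lemma ext_lt (p : Fin N → ℤ) {m : ℕ} (h : m < N) : ext p m = p ⟨m, h⟩ := by
  simp [ext, Nat.mod_eq_of_lt h]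

lemma ext_add_N (p : Fin N → ℤ) (m : ℕ) : ext p (m + N) = ext p m := by
  simp [ext, Nat.add_mod_right]

lemma hgt_succ (p : Fin N → ℤ) (m : ℕ) : hgt p (m + 1) = hgt p m + ext p m := by
  rw [hgt, Finset.sum_range_succ]; rfl

lemma psum_eq_hgt (p : Fin N → ℤ) : ∀ m ≤ N, psum p m = hgt p m := by
  intro m
  induction m with
  | zero =>
    intro _; simp [psum, hgt]
  | succ m ih =>
    intro h
    have hm : m < N := h
    have hfil : (univ.filter fun j : Fin N => (j : ℕ) < m + 1)
        = insert ⟨m, hm⟩ (univ.filter fun j : Fin N => (j : ℕ) < m) := by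
      ext j
      simp only [mem_filter, mem_univ, true_and, mem_insert, Fin.ext_iff]
      omega
    rw [psum, hfil, Finset.sum_insert (by simp), hgt, Finset.sum_range_succ,
      ext_lt p hm, ← psum, ih (le_of_lt hm), hgt]
    ring

lemma ext_shf (t : Fin N) (p : Fin N → ℤ) (m : ℕ) :
    ext (shf t p) m = ext p (m + (t : ℕ)) := by
  unfold ext shf
  congr 1
  apply Fin.ext
  simp [Fin.val_add, Nat.mod_add_mod]

lemma psum_shf (t : Fin N) (p : Fin N → ℤ) {m : ℕ} (h : m ≤ N) :
    psum (shf t p) m = hgt p ((t : ℕ) + m) - hgt p (t : ℕ) := by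
  rw [psum_eq_hgt _ _ h]
  have : hgt p ((t : ℕ) + m) - hgt p (t : ℕ) = ∑ i ∈ Finset.Ico (t : ℕ) ((t : ℕ) + m), ext p i := by
    rw [Finset.sum_Ico_eq_sub _ (Nat.le_add_right _ _)]
    rfl
  rw [this, Finset.sum_Ico_eq_sum_range]
  simp only [Nat.add_sub_cancel_left]
  unfold hgt
  refine Finset.sum_congr rfl fun i _ => ?_
  rw [ext_shf]
  congr 1
  omega

lemma hgt_add_N (p : Fin N → ℤ) (m : ℕ) : hgt p (m + N) = hgt p m + hgt p N := by
  induction m with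
  | zero => simp [hgt]
  | succ m ih =>
    rw [show m + 1 + N = (m + N) + 1 by omega, hgt_succ, ih, ext_add_N, hgt_succ]
    ring

/-- rank of an element in a finset under an injective map into a linear order -/
lemma rank_exists_unique {α β : Type*} [DecidableEq α] [LinearOrder β]
    (D : Finset α) (e : α → β) (he : Set.InjOn e D) {k : ℕ} (hk1 : 1 ≤ k) (hk2 : k ≤ D.card) :
    ∃! t, t ∈ D ∧ (D.filter (fun r => e r ≤ e t)).card = k := by
  classical
  set g : α → ℕ := fun t => (D.filter (fun r => e r ≤ e t)).card with hg
  have hinj : ∀ t ∈ D, ∀ t' ∈ D, g t = g t' → t = t' := by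
    have key : ∀ t ∈ D, ∀ t' ∈ D, g t = g t' → e t ≤ e t' → t = t' := by
      intro t ht t' ht' h hle
      have hsub : D.filter (fun r => e r ≤ e t) ⊆ D.filter (fun r => e r ≤ e t') := by
        intro r hr
        rw [Finset.mem_filter] at hr ⊢
        exact ⟨hr.1, le_trans hr.2 hle⟩
      have heqs := Finset.eq_of_subset_of_card_le hsub (le_of_eq h.symm)
      have ht'mem : t' ∈ D.filter (fun r => e r ≤ e t) := by
        rw [heqs]; exact Finset.mem_filter.mpr ⟨ht', le_refl _⟩
      have : e t' ≤ e t := (Finset.mem_filter.mp ht'mem).2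
      exact he ht ht' (le_antisymm hle this)
    intro t ht t' ht' h
    rcases le_total (e t) (e t') with hle | hle
    · exact key t ht t' ht' h hle
    · exact (key t' ht' t ht h.symm hle).symm
  have hmem : ∀ t ∈ D, g t ∈ Finset.Icc 1 D.card := by
    intro t ht
    rw [Finset.mem_Icc]
    constructor
    · rw [hg]
      exact Finset.card_pos.mpr ⟨t, Finset.mem_filter.mpr ⟨ht, le_refl _⟩⟩
    · exact le_trans (Finset.card_filter_le _ _) (le_refl _)
  have himg : D.image g = Finset.Icc 1 D.card := by
    apply Finset.eq_of_subset_of_card_le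
    · exact Finset.image_subset_iff.mpr hmem
    · rw [Finset.card_image_of_injOn (fun a ha b hb => hinj a ha b hb), Nat.card_Icc]
      simp
  have hk : k ∈ D.image g := by
    rw [himg, Finset.mem_Icc]; exact ⟨hk1, hk2⟩
  obtain ⟨t, ht, hgt⟩ := Finset.mem_image.mp hk
  exact ⟨t, ⟨ht, hgt⟩, fun t' ⟨ht', hgt'⟩ => hinj t' ht' t ht (hgt'.trans hgt.symm)⟩

end CFaux

namespace CFaux

lemma card_filter_addRight {N : ℕ} [NeZero N] (t : Fin N) (Q : Fin N → Prop) [DecidablePred Q] :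
    (univ.filter (fun i => Q (i + t))).card = (univ.filter Q).card := by
  apply Finset.card_bij' (fun i _ => i + t) (fun r _ => r - t)
  · intro i hi
    simpa using (Finset.mem_filter.mp hi).2
  · intro r hr
    simp only [Finset.mem_filter, Finset.mem_univ, true_and] at hr ⊢
    rwa [sub_add_cancel]
  · intro i _
    simp [add_sub_cancel_right]
  · intro r _
    simp [sub_add_cancel]

variable {n : ℕ}

/-- order key -/
def ee (p : Fin (2*n+1) → ℤ) (r : Fin (2*n+1)) : ℤ ×ₗ ℤ :=
  toLex (hgt p (r : ℕ), (2*n+1 : ℤ) - ((r : ℕ) : ℤ))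

lemma downs_card {p : Fin (2*n+1) → ℤ} (h1 : ∀ i, p i = 1 ∨ p i = -1)
    (h2 : (univ.filter (fun i => p i = 1)).card = n + 1) :
    (univ.filter (fun i : Fin (2*n+1) => p i = -1)).card = n := by
  have hcompl : (univ.filter (fun i : Fin (2*n+1) => p i = -1))
      = univ \ (univ.filter (fun i => p i = 1)) := by
    ext i
    rcases h1 i with h | h <;> simp [h]
  rw [hcompl, Finset.card_sdiff_of_subset (Finset.filter_subset _ _), h2, Finset.card_univ,
    Fintype.card_fin]
  omega

lemma hgt_total {p : Fin (2*n+1) → ℤ} (h1 : ∀ i, p i = 1 ∨ p i = -1)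
    (h2 : (univ.filter (fun i => p i = 1)).card = n + 1) :
    hgt p (2*n+1) = 1 := by
  have := psum_eq_hgt p (2*n+1) le_rfl
  rw [← this]
  have huniv : (univ.filter fun j : Fin (2*n+1) => (j : ℕ) < 2*n+1) = univ := by
    ext j; simp [j.isLt]; have := j.isLt; omega
  rw [psum, huniv]
  rw [← Finset.sum_filter_add_sum_filter_not univ (fun i => p i = 1) p]
  have e1 : ∑ i ∈ univ.filter (fun i => p i = 1), p i = (n+1 : ℤ) := by
    rw [Finset.sum_congr rfl (fun i hi => (Finset.mem_filter.mp hi).2)]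
    simp [h2]
  have hne : (univ.filter fun i : Fin (2*n+1) => ¬ p i = 1)
      = univ.filter (fun i => p i = -1) := by
    ext i
    rcases h1 i with h | h <;> simp [h]
  have e2 : ∑ i ∈ univ.filter (fun i : Fin (2*n+1) => ¬ p i = 1), p i = -(n : ℤ) := by
    rw [hne, Finset.sum_congr rfl (fun i hi => (Finset.mem_filter.mp hi).2)]
    simp [downs_card h1 h2]
  rw [e1, e2]
  ring

lemma cond_iff {p : Fin (2*n+1) → ℤ} (hN1 : hgt p (2*n+1) = 1) (t i : Fin (2*n+1)) :
    psum (shf t p) (i : ℕ) ≤ 0 ↔ ee p (i + t) ≤ ee p t := by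
  rw [psum_shf t p (le_of_lt i.isLt)]
  have hval : ((i + t : Fin (2*n+1)) : ℕ) = ((i : ℕ) + (t : ℕ)) % (2*n+1) := Fin.val_add i t
  have hiN : (i : ℕ) < 2*n+1 := i.isLt
  have htN : (t : ℕ) < 2*n+1 := t.isLt
  rw [ee, ee, Prod.Lex.le_iff]
  simp only [ofLex_toLex]
  rcases Nat.lt_or_ge ((i : ℕ) + (t : ℕ)) (2*n+1) with h1 | h1
  · have h2 : ((i + t : Fin (2*n+1)) : ℕ) = (i : ℕ) + (t : ℕ) := by
      rw [hval]; exact Nat.mod_eq_of_lt h1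
    have h3 : hgt p ((t : ℕ) + (i : ℕ)) = hgt p ((i + t : Fin (2*n+1)) : ℕ) := by
      rw [h2]; congr 1; omega
    rw [h3]
    omega
  · have h2 : ((i + t : Fin (2*n+1)) : ℕ) = (i : ℕ) + (t : ℕ) - (2*n+1) := by
      rw [hval, Nat.mod_eq_sub_mod h1, Nat.mod_eq_of_lt (by omega)]
    have h3 : hgt p ((t : ℕ) + (i : ℕ)) = hgt p ((i + t : Fin (2*n+1)) : ℕ) + 1 := by
      rw [h2, show (t : ℕ) + (i : ℕ) = ((i : ℕ) + (t : ℕ) - (2*n+1)) + (2*n+1) by omega,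
        hgt_add_N, hN1]
    rw [h3]
    omega

lemma stat_shf {p : Fin (2*n+1) → ℤ} (hN1 : hgt p (2*n+1) = 1) (t : Fin (2*n+1)) :
    (univ.filter (fun i : Fin (2*n+1) => shf t p i = -1 ∧ psum (shf t p) (i : ℕ) ≤ 0)).card
      = (univ.filter (fun r : Fin (2*n+1) => p r = -1 ∧ ee p r ≤ ee p t)).card := by
  have hcong : (univ.filter (fun i : Fin (2*n+1) => shf t p i = -1 ∧ psum (shf t p) (i : ℕ) ≤ 0))
      = (univ.filter (fun i : Fin (2*n+1) => p (i + t) = -1 ∧ ee p (i + t) ≤ ee p t)) := by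
    apply Finset.filter_congr
    intro i _
    exact and_congr Iff.rfl (cond_iff hN1 t i)
  rw [hcong]
  exact card_filter_addRight t (fun r => p r = -1 ∧ ee p r ≤ ee p t)

lemma exists_unique_shift {p : Fin (2*n+1) → ℤ} (h1 : ∀ i, p i = 1 ∨ p i = -1)
    (h2 : (univ.filter (fun i => p i = 1)).card = n + 1) {k : ℕ} (hk1 : 1 ≤ k) (hk2 : k ≤ n) :
    ∃! t : Fin (2*n+1), p t = -1 ∧
      (univ.filter (fun r : Fin (2*n+1) => p r = -1 ∧ ee p r ≤ ee p t)).card = k := by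
  have hD : (univ.filter (fun i : Fin (2*n+1) => p i = -1)).card = n := downs_card h1 h2
  have he : Set.InjOn (ee p) (univ.filter (fun i : Fin (2*n+1) => p i = -1)) := by
    intro r _ s _ hrs
    have := congrArg (fun x : ℤ ×ₗ ℤ => (ofLex x).2) hrs
    simp only [ee, ofLex_toLex] at this
    have : ((r : ℕ) : ℤ) = ((s : ℕ) : ℤ) := by omega
    exact Fin.ext (by exact_mod_cast this)
  have := rank_exists_unique (univ.filter (fun i : Fin (2*n+1) => p i = -1)) (ee p) he hk1
    (by omega)
  obtain ⟨t, ⟨htD, htc⟩, huniq⟩ := this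
  refine ⟨t, ⟨(Finset.mem_filter.mp htD).2, ?_⟩, ?_⟩
  · rw [← htc, Finset.filter_filter]
  · intro t' ⟨ht'd, ht'c⟩
    apply huniq
    refine ⟨Finset.mem_filter.mpr ⟨Finset.mem_univ _, ht'd⟩, ?_⟩
    rw [Finset.filter_filter]
    exact ht'c

end CFaux

namespace CFaux

lemma shf_ups {N : ℕ} [NeZero N] (t : Fin N) (p : Fin N → ℤ) :
    (univ.filter (fun i => shf t p i = 1)).card = (univ.filter (fun i => p i = 1)).card :=
  card_filter_addRight t (fun r => p r = 1)

lemma hfirst {N : ℕ} [NeZero N] (p : Fin N → ℤ) (t : Fin N) (h : 0 < N) :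
    shf t p ⟨0, h⟩ = p t := by
  unfold shf
  congr 1
  apply Fin.ext
  simp [Fin.val_add, Nat.mod_eq_of_lt t.isLt]

def Sty (n k : ℕ) := {p : Fin (2*n+1) → ℤ //
      (∀ i, p i = 1 ∨ p i = -1) ∧
      (univ.filter (fun i => p i = 1)).card = n + 1 ∧
      p ⟨0, Nat.succ_pos _⟩ = -1 ∧
      (univ.filter (fun i : Fin (2*n+1) => p i = -1 ∧ psum p (i : ℕ) ≤ 0)).card = k}

def Tty (n : ℕ) := {p : Fin (2*n+1) → ℤ //
      (∀ i, p i = 1 ∨ p i = -1) ∧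
      (univ.filter (fun i => p i = 1)).card = n + 1}

lemma card_Tty (n : ℕ) : Nat.card (Tty n) = (2*n+1).choose (n+1) := by
  have equ : Tty n ≃ {s : Finset (Fin (2*n+1)) // s.card = n+1} :=
    { toFun := fun p => ⟨univ.filter (fun i => p.1 i = 1), p.2.2⟩
      invFun := fun A => ⟨fun i => if i ∈ A.1 then 1 else -1,
        ⟨fun i => by by_cases h : i ∈ A.1 <;> simp [h], by
          have h : (univ.filter fun i : Fin (2*n+1) =>
              (if i ∈ A.1 then (1:ℤ) else -1) = 1) = A.1 := by
            ext i; by_cases h : i ∈ A.1 <;> simp [h]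
          rw [h, A.2]⟩⟩
      left_inv := fun p => Subtype.ext (funext fun i => by
        rcases p.2.1 i with h | h <;> simp [h])
      right_inv := fun A => Subtype.ext (by
        ext i; by_cases h : i ∈ A.1 <;> simp [h]) }
  rw [Nat.card_congr equ, Nat.card_eq_fintype_card, Fintype.card_finset_len, Fintype.card_fin]

lemma card_key (n k : ℕ) (hk1 : 1 ≤ k) (hk2 : k ≤ n) :
    Nat.card (Sty n k) * (2*n+1) = (2*n+1).choose (n+1) := by
  classical
  let F : Sty n k × Fin (2*n+1) → Tty n := fun qj =>
    ⟨shf (-qj.2) qj.1.1, fun i => qj.1.2.1 _, (shf_ups (-qj.2) qj.1.1).trans qj.1.2.2.1⟩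
  have hFbij : Function.Bijective F := by
    constructor
    · rintro ⟨q, j⟩ ⟨q', j'⟩ hF
      have hval : shf (-j) q.1 = shf (-j') q'.1 := congrArg Subtype.val hF
      set p : Fin (2*n+1) → ℤ := shf (-j) q.1 with hp
      have hq : shf j p = q.1 := by
        funext i; show q.1 (i + j + -j) = q.1 i; rw [add_neg_cancel_right]
      have hq' : shf j' p = q'.1 := by
        funext i
        show p (i + j') = q'.1 i
        rw [hval]
        show q'.1 (i + j' + -j') = q'.1 i
        rw [add_neg_cancel_right]
      have hsteps : ∀ i, p i = 1 ∨ p i = -1 := fun i => q.2.1 _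
      have hups : (univ.filter (fun i => p i = 1)).card = n + 1 :=
        (shf_ups (-j) q.1).trans q.2.2.1
      have hN1 : hgt p (2*n+1) = 1 := hgt_total hsteps hups
      obtain ⟨t0, _, hu⟩ := exists_unique_shift hsteps hups hk1 hk2
      have c1 : p j = -1 ∧
          (univ.filter (fun r : Fin (2*n+1) => p r = -1 ∧ ee p r ≤ ee p j)).card = k := by
        constructor
        · rw [← hfirst p j (Nat.succ_pos _), hq]; exact q.2.2.2.1
        · have hs := q.2.2.2.2
          rw [← hq] at hs
          rwa [stat_shf hN1 j] at hs
      have c2 : p j' = -1 ∧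
          (univ.filter (fun r : Fin (2*n+1) => p r = -1 ∧ ee p r ≤ ee p j')).card = k := by
        constructor
        · rw [← hfirst p j' (Nat.succ_pos _), hq']; exact q'.2.2.2.1
        · have hs := q'.2.2.2.2
          rw [← hq'] at hs
          rwa [stat_shf hN1 j'] at hs
      have hjj : j = j' := (hu j c1).trans (hu j' c2).symm
      have hqq : q = q' := Subtype.ext (by rw [← hq, ← hq', hjj])
      rw [hqq, hjj]
    · intro p
      have hsteps := p.2.1
      have hups := p.2.2
      have hN1 : hgt p.1 (2*n+1) = 1 := hgt_total hsteps hups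
      obtain ⟨t, ⟨htd, hts⟩, _⟩ := exists_unique_shift hsteps hups hk1 hk2
      refine ⟨⟨⟨shf t p.1, fun i => hsteps _, (shf_ups t p.1).trans hups, ?_, ?_⟩, t⟩, ?_⟩
      · rw [hfirst p.1 t (Nat.succ_pos _)]; exact htd
      · rw [stat_shf hN1 t]; exact hts
      · apply Subtype.ext
        funext i
        show p.1 (i + -t + t) = p.1 i
        rw [neg_add_cancel_right]
  have hc := Nat.card_eq_of_bijective F hFbij
  have hfin : Nat.card (Fin (2*n+1)) = 2*n+1 := by simp
  rw [Nat.card_prod, hfin] at hc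
  rw [hc, card_Tty]

end CFaux

/-- Among paths in 𝒫(n,1,1) (steps ±1, with n+1 up steps and n down steps) starting
with a down step, for each `1 ≤ k ≤ n` the number with exactly `k` down steps
starting on or below the x-axis is `(1/n)·C(2n,n-1)`. -/
theorem catalan_chung_feller_down (n k : ℕ) (hn : 1 ≤ n) (hk1 : 1 ≤ k) (hk2 : k ≤ n) :
    Nat.card {p : Fin (2*n+1) → ℤ //
      (∀ i, p i = 1 ∨ p i = -1) ∧
      (univ.filter (fun i => p i = 1)).card = n + 1 ∧
      p ⟨0, Nat.succ_pos _⟩ = -1 ∧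
      (univ.filter (fun i : Fin (2*n+1) => p i = -1 ∧ psum p (i : ℕ) ≤ 0)).card = k }
      * n = Nat.choose (2*n) (n-1) := by
  have hcount := CFaux.card_key n k hk1 hk2
  have hch : (2*n+1).choose (n+1) = (2*n+1).choose n := by
    rw [← Nat.choose_symm (show n ≤ 2*n+1 by omega)]
    congr 1
    omega
  have hid : (2*n+1) * (2*n).choose (n-1) = (2*n+1).choose n * n := by
    have h := Nat.add_one_mul_choose_eq (2*n) (n-1)
    have h1 : n - 1 + 1 = n := by omega
    rw [h1] at h
    simpa [Nat.succ_eq_add_one] using h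
  have hpos : 0 < 2*n+1 := by omega
  apply Nat.eq_of_mul_eq_mul_right hpos
  show Nat.card (CFaux.Sty n k) * n * (2*n+1) = (2*n).choose (n-1) * (2*n+1)
  calc Nat.card (CFaux.Sty n k) * n * (2*n+1)
      = Nat.card (CFaux.Sty n k) * (2*n+1) * n := by ring
    _ = (2*n+1).choose (n+1) * n := by rw [hcount]
    _ = (2*n+1).choose n * n := by rw [hch]
    _ = (2*n+1) * (2*n).choose (n-1) := hid.symm
    _ = (2*n).choose (n-1) * (2*n+1) := by ring
end

section
/- Let n ≥ 0. For each k with 1 ≤ k ≤ 2n+1, the number of paths p in 𝒫(n,1,1) such that exactly k of the vertices s_0, s_1, …, s_{2n} satisfy s_i ≤ 0 equals (1/(2n+1))·C(2n+1,n). -/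
open Finset

/-- Lex-type comparison used for the cycle lemma. -/
def cfcond (t : ℕ → ℤ) (i c : ℕ) : Prop := t i < t c ∨ (t i = t c ∧ c ≤ i)

instance (t : ℕ → ℤ) (i c : ℕ) : Decidable (cfcond t i c) := by
  unfold cfcond; infer_instance

/-- Rank of `c` among `0,…,N-1` under `cfcond`. -/
def cfrank (t : ℕ → ℤ) (N c : ℕ) : ℕ :=
  ((range N).filter (fun i => cfcond t i c)).card

lemma cfcond_refl (t : ℕ → ℤ) (c : ℕ) : cfcond t c c := Or.inr ⟨rfl, le_refl _⟩

lemma cfcond_trans {t : ℕ → ℤ} {i c d : ℕ} (h1 : cfcond t i c) (h2 : cfcond t c d) :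
    cfcond t i d := by unfold cfcond at *; omega

lemma cfcond_total (t : ℕ → ℤ) (i c : ℕ) : cfcond t i c ∨ cfcond t c i := by
  unfold cfcond; omega

lemma cfcond_antisymm {t : ℕ → ℤ} {i c : ℕ} (h1 : cfcond t i c) (h2 : cfcond t c i) :
    i = c := by unfold cfcond at *; omega

lemma cfrank_lt {t : ℕ → ℤ} {N c c' : ℕ} (hc' : c' < N) (h : cfcond t c c') (hne : c ≠ c') :
    cfrank t N c < cfrank t N c' := by
  apply Finset.card_lt_card
  constructor
  · intro i hi
    simp only [mem_filter, mem_range] at *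
    exact ⟨hi.1, cfcond_trans hi.2 h⟩
  · intro hsub
    have hc'mem : c' ∈ (range N).filter (fun i => cfcond t i c') := by
      simp [mem_filter, mem_range, hc', cfcond_refl]
    have := hsub hc'mem
    simp only [mem_filter, mem_range] at this
    exact hne (cfcond_antisymm h this.2)

lemma cfrank_inj {t : ℕ → ℤ} {N c c' : ℕ} (hc : c < N) (hc' : c' < N)
    (h : cfrank t N c = cfrank t N c') : c = c' := by
  by_contra hne
  rcases cfcond_total t c c' with h1 | h1
  · exact absurd h (Nat.ne_of_lt (cfrank_lt hc' h1 hne))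
  · exact absurd h.symm (Nat.ne_of_lt (cfrank_lt hc h1 (Ne.symm hne)))

lemma cfrank_pos {t : ℕ → ℤ} {N c : ℕ} (hc : c < N) : 1 ≤ cfrank t N c := by
  rw [Nat.one_le_iff_ne_zero, ← Nat.pos_iff_ne_zero]
  apply Finset.card_pos.2
  exact ⟨c, by simp [mem_filter, mem_range, hc, cfcond_refl]⟩

lemma cfrank_le (t : ℕ → ℤ) (N c : ℕ) : cfrank t N c ≤ N := by
  have := Finset.card_filter_le (range N) (fun i => cfcond t i c)
  simpa [cfrank] using this

lemma cfrank_surj (t : ℕ → ℤ) (N k : ℕ) (hk1 : 1 ≤ k) (hk2 : k ≤ N) :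
    ∃ c < N, cfrank t N c = k := by
  have hN : 0 < N := lt_of_lt_of_le hk1 hk2
  set F : Fin N → Fin N := fun c => ⟨cfrank t N c - 1, by
    have h1 := cfrank_pos (t := t) c.2
    have h2 := cfrank_le t N c.1
    omega⟩ with hF
  have hinj : Function.Injective F := by
    intro a b hab
    have hab2 : cfrank t N a.1 - 1 = cfrank t N b.1 - 1 := congrArg Fin.val hab
    have h1 := cfrank_pos (t := t) a.2
    have h2 := cfrank_pos (t := t) b.2
    exact Fin.ext (cfrank_inj a.2 b.2 (by omega : cfrank t N a.1 = cfrank t N b.1))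
  have hsurj := Finite.injective_iff_surjective.1 hinj
  obtain ⟨c, hc⟩ := hsurj ⟨k - 1, by omega⟩
  refine ⟨c.1, c.2, ?_⟩
  have hcv : cfrank t N c.1 - 1 = k - 1 := congrArg Fin.val hc
  have h1 := cfrank_pos (t := t) c.2
  omega

/-- Extended height function (indices wrap around mod `2n+1`). -/
def cft (n : ℕ) (p : Fin (2*n+1) → ℤ) (m : ℕ) : ℤ :=
  ∑ j ∈ range m, p ⟨j % (2*n+1), Nat.mod_lt _ (by omega)⟩

/-- Cyclic rotation of a path. -/
def cfrot (n : ℕ) (c : Fin (2*n+1)) (p : Fin (2*n+1) → ℤ) : Fin (2*n+1) → ℤ :=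
  fun i => p (i + c)

lemma cf_sum_eq_one {n : ℕ} {p : Fin (2*n+1) → ℤ} (h1 : ∀ i, p i = 1 ∨ p i = -1)
    (h2 : (univ.filter (fun i => p i = 1)).card = n + 1) : ∑ i, p i = 1 := by
  classical
  have hsplit : (univ.filter (fun i => p i = 1)).card
      + (univ.filter (fun i => ¬ p i = 1)).card = 2*n+1 := by
    rw [Finset.card_filter_add_card_filter_not]
    simp
  have hs : ∑ i, p i = ∑ i ∈ univ.filter (fun i => p i = 1), p i
      + ∑ i ∈ univ.filter (fun i => ¬ p i = 1), p i :=
    (Finset.sum_filter_add_sum_filter_not _ _ _).symm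
  have hA : ∑ i ∈ univ.filter (fun i => p i = 1), p i = (n+1 : ℤ) := by
    rw [Finset.sum_congr rfl (fun i hi => (mem_filter.1 hi).2), Finset.sum_const, h2]
    simp
  have hB : ∑ i ∈ univ.filter (fun i => ¬ p i = 1), p i = -(n : ℤ) := by
    rw [Finset.sum_congr rfl (fun i hi => ((h1 i).resolve_left (mem_filter.1 hi).2)),
      Finset.sum_const]
    have : (univ.filter (fun i => ¬ p i = 1)).card = n := by omega
    rw [this]; simp
  rw [hs, hA, hB]; ring

lemma cft_full {n : ℕ} (p : Fin (2*n+1) → ℤ) : cft n p (2*n+1) = ∑ i, p i := by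
  rw [cft, ← Fin.sum_univ_eq_sum_range (fun j => p ⟨j % (2*n+1), Nat.mod_lt _ (by omega)⟩)]
  exact Finset.sum_congr rfl (fun i _ => by congr 1; exact Fin.ext (Nat.mod_eq_of_lt i.2))

lemma cft_succ {n : ℕ} (p : Fin (2*n+1) → ℤ) (m : ℕ) :
    cft n p (m+1) = cft n p m + p ⟨m % (2*n+1), Nat.mod_lt _ (by omega)⟩ :=
  Finset.sum_range_succ _ _

lemma cft_period {n : ℕ} {p : Fin (2*n+1) → ℤ} (hsum : ∑ i, p i = 1) (m : ℕ) :
    cft n p (m + (2*n+1)) = cft n p m + 1 := by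
  induction m with
  | zero =>
    have : cft n p 0 = 0 := by simp [cft]
    rw [Nat.zero_add, cft_full, hsum, this]; ring
  | succ m ih =>
    have e1 : m + 1 + (2*n+1) = (m + (2*n+1)) + 1 := by omega
    rw [e1, cft_succ, ih, cft_succ]
    have : (⟨(m + (2*n+1)) % (2*n+1), Nat.mod_lt _ (by omega)⟩ : Fin (2*n+1))
        = ⟨m % (2*n+1), Nat.mod_lt _ (by omega)⟩ := Fin.ext (by
      simp [Nat.add_mod_right])
    rw [this]; ring

lemma psum_eq_range {n : ℕ} (q : Fin (2*n+1) → ℤ) {m : ℕ} (hm : m ≤ 2*n+1) :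
    psum q m = ∑ j ∈ range m, q ⟨j % (2*n+1), Nat.mod_lt _ (by omega)⟩ := by
  rw [psum]
  refine Finset.sum_nbij' (fun j => (j : ℕ)) (fun a => ⟨a % (2*n+1), Nat.mod_lt _ (by omega)⟩)
    ?_ ?_ ?_ ?_ ?_
  · intro a ha; simp only [mem_filter, mem_univ, true_and] at ha; simpa using ha
  · intro a ha; simp only [mem_range] at ha
    simp only [mem_filter, mem_univ, true_and]
    exact lt_of_le_of_lt (Nat.mod_le _ _) ha
  · intro a _
    exact Fin.ext (by simpa using (Nat.mod_eq_of_lt a.2))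
  · intro a ha; simp only [mem_range] at ha; exact Nat.mod_eq_of_lt (lt_of_lt_of_le ha hm)
  · intro a _
    congr 1
    exact Fin.ext (by simpa using (Nat.mod_eq_of_lt a.2).symm)

lemma psum_rot {n : ℕ} (p : Fin (2*n+1) → ℤ) (c : Fin (2*n+1)) {m : ℕ} (hm : m ≤ 2*n+1) :
    psum (cfrot n c p) m = cft n p (c.1 + m) - cft n p c.1 := by
  have key : cft n p (c.1 + m) = cft n p c.1
      + ∑ j ∈ Finset.Ico c.1 (c.1 + m), p ⟨j % (2*n+1), Nat.mod_lt _ (by omega)⟩ := by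
    rw [cft, cft, Finset.range_eq_Ico, Finset.range_eq_Ico]
    exact (Finset.sum_Ico_consecutive (fun j => p ⟨j % (2*n+1), Nat.mod_lt _ (by omega)⟩) (Nat.zero_le _) (Nat.le_add_right _ _)).symm
  rw [key, psum_eq_range _ hm, Finset.sum_Ico_eq_sum_range]
  have hmm : c.1 + m - c.1 = m := by omega
  rw [hmm]
  have : ∀ j ∈ range m, cfrot n c p ⟨j % (2*n+1), Nat.mod_lt _ (by omega)⟩
      = p ⟨(c.1 + j) % (2*n+1), Nat.mod_lt _ (by omega)⟩ := by
    intro j hj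
    simp only [mem_range] at hj
    show p (⟨j % (2*n+1), _⟩ + c) = _
    congr 1
    rw [Fin.add_def]
    exact Fin.ext (by simp [Nat.mod_add_mod, Nat.add_comm])
  rw [Finset.sum_congr rfl this]
  ring

lemma stat_rot {n : ℕ} {p : Fin (2*n+1) → ℤ} (hsum : ∑ i, p i = 1) (c : Fin (2*n+1)) :
    ((range (2*n+1)).filter (fun m => psum (cfrot n c p) m ≤ 0)).card
      = cfrank (cft n p) (2*n+1) c.1 := by
  classical
  -- Step 1: rewrite the predicate
  have step1 : (range (2*n+1)).filter (fun m => psum (cfrot n c p) m ≤ 0)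
      = (range (2*n+1)).filter (fun m => cft n p (c.1 + m) ≤ cft n p c.1) := by
    apply Finset.filter_congr
    intro m hm
    simp only [mem_range] at hm
    rw [psum_rot p c (le_of_lt hm)]
    constructor <;> intro h <;> omega
  rw [step1]
  -- Step 2: reindex by j = c + m
  have step2 : ((range (2*n+1)).filter (fun m => cft n p (c.1 + m) ≤ cft n p c.1)).card
      = ((Finset.Ico c.1 (c.1 + (2*n+1))).filter (fun j => cft n p j ≤ cft n p c.1)).card := by
    refine Finset.card_nbij' (fun m => c.1 + m) (fun j => j - c.1) ?_ ?_ ?_ ?_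
    · intro a ha
      simp only [Finset.mem_coe, mem_filter, mem_range, Finset.mem_Ico] at *
      exact ⟨⟨by omega, by omega⟩, ha.2⟩
    · intro j hj
      simp only [Finset.mem_coe, mem_filter, mem_range, Finset.mem_Ico] at *
      refine ⟨by omega, ?_⟩
      have hj2 : c.1 + (j - c.1) = j := by omega
      rw [hj2]; exact hj.2
    · intro a _; dsimp only; omega
    · intro j hj; simp only [Finset.mem_coe, mem_filter, Finset.mem_Ico] at hj; dsimp only; omega
  rw [step2]
  -- Step 3: split the Ico
  have hcN : c.1 ≤ 2*n+1 := le_of_lt c.2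
  have hsplit : Finset.Ico c.1 (c.1 + (2*n+1))
      = Finset.Ico c.1 (2*n+1) ∪ Finset.Ico (2*n+1) (c.1 + (2*n+1)) :=
    (Finset.Ico_union_Ico_eq_Ico hcN (by omega)).symm
  rw [hsplit, Finset.filter_union, Finset.card_union_of_disjoint
    (Finset.disjoint_filter_filter (Finset.Ico_disjoint_Ico_consecutive _ _ _))]
  -- Step 4: the high part equals the low strict part
  have step4 : ((Finset.Ico (2*n+1) (c.1 + (2*n+1))).filter
        (fun j => cft n p j ≤ cft n p c.1)).card
      = ((range c.1).filter (fun i => cft n p i < cft n p c.1)).card := by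
    refine Finset.card_nbij' (fun j => j - (2*n+1)) (fun i => i + (2*n+1)) ?_ ?_ ?_ ?_
    · intro j hj
      simp only [Finset.mem_coe, mem_filter, Finset.mem_Ico, mem_range] at *
      refine ⟨by omega, ?_⟩
      have hper := cft_period hsum (j - (2*n+1))
      have hjN : j - (2*n+1) + (2*n+1) = j := by omega
      rw [hjN] at hper
      omega
    · intro i hi
      simp only [Finset.mem_coe, mem_filter, Finset.mem_Ico, mem_range] at *
      have hper := cft_period hsum i
      exact ⟨⟨by omega, by omega⟩, by rw [hper]; omega⟩
    · intro j hj; simp only [Finset.mem_coe, mem_filter, Finset.mem_Ico] at hj; dsimp only; omega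
    · intro i _; dsimp only; omega
  rw [step4]
  -- Step 5: identify with cfrank
  have hrange : range (2*n+1) = range c.1 ∪ Finset.Ico c.1 (2*n+1) := by
    rw [Finset.range_eq_Ico, Finset.range_eq_Ico]
    exact (Finset.Ico_union_Ico_eq_Ico (Nat.zero_le _) hcN).symm
  rw [cfrank, hrange, Finset.filter_union, Finset.card_union_of_disjoint
    (Finset.disjoint_filter_filter
      (by rw [Finset.range_eq_Ico]; exact Finset.Ico_disjoint_Ico_consecutive _ _ _))]
  have e1 : (range c.1).filter (fun i => cfcond (cft n p) i c.1)
      = (range c.1).filter (fun i => cft n p i < cft n p c.1) := by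
    apply Finset.filter_congr
    intro i hi
    simp only [mem_range] at hi
    unfold cfcond
    constructor
    · intro h; rcases h with h | ⟨_, h⟩ <;> omega
    · intro h; exact Or.inl h
  have e2 : (Finset.Ico c.1 (2*n+1)).filter (fun i => cfcond (cft n p) i c.1)
      = (Finset.Ico c.1 (2*n+1)).filter (fun i => cft n p i ≤ cft n p c.1) := by
    apply Finset.filter_congr
    intro i hi
    simp only [Finset.mem_Ico] at hi
    unfold cfcond
    constructor
    · intro h; rcases h with h | ⟨h, _⟩ <;> omega
    · intro h
      rcases lt_or_eq_of_le h with h2 | h2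
      · exact Or.inl h2
      · exact Or.inr ⟨h2, hi.1⟩
  rw [e1, e2]
  omega

lemma cfrot_cfrot {n : ℕ} (c d : Fin (2*n+1)) (p : Fin (2*n+1) → ℤ) :
    cfrot n c (cfrot n d p) = cfrot n (c + d) p := by
  funext i
  simp [cfrot, add_assoc]

lemma cfrot_zero {n : ℕ} (p : Fin (2*n+1) → ℤ) : cfrot n 0 p = p := by
  funext i
  simp [cfrot]

lemma cfrot_pm {n : ℕ} {p : Fin (2*n+1) → ℤ} (h1 : ∀ i, p i = 1 ∨ p i = -1)
    (c : Fin (2*n+1)) : ∀ i, cfrot n c p i = 1 ∨ cfrot n c p i = -1 :=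
  fun i => h1 (i + c)

lemma cfrot_card {n : ℕ} {p : Fin (2*n+1) → ℤ}
    (h2 : (univ.filter (fun i => p i = 1)).card = n + 1) (c : Fin (2*n+1)) :
    (univ.filter (fun i => cfrot n c p i = 1)).card = n + 1 := by
  rw [← h2]
  refine Finset.card_nbij' (fun i => i + c) (fun j => j - c) ?_ ?_ ?_ ?_
  · intro a ha
    simp only [Finset.mem_coe, mem_filter, mem_univ, true_and] at *
    exact ha
  · intro j hj
    simp only [Finset.mem_coe, mem_filter, mem_univ, true_and] at *
    show p (j - c + c) = 1
    rwa [sub_add_cancel]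
  · intro a _; dsimp only; rw [add_sub_cancel_right]
  · intro j _; dsimp only; rw [sub_add_cancel]

lemma cf_unique_shift {n : ℕ} {p : Fin (2*n+1) → ℤ} (h1 : ∀ i, p i = 1 ∨ p i = -1)
    (h2 : (univ.filter (fun i => p i = 1)).card = n + 1) {k : ℕ}
    (hk : ((range (2*n+1)).filter (fun m => psum p m ≤ 0)).card = k)
    (d : Fin (2*n+1))
    (hd : ((range (2*n+1)).filter (fun m => psum (cfrot n d p) m ≤ 0)).card = k) :
    d = 0 := by
  have hs := cf_sum_eq_one h1 h2
  have e0 : ((range (2*n+1)).filter (fun m => psum (cfrot n 0 p) m ≤ 0)).card = k := by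
    rw [cfrot_zero]; exact hk
  rw [stat_rot hs] at hd e0
  have h0 : ((0 : Fin (2*n+1)) : ℕ) = 0 := rfl
  rw [h0] at e0
  exact Fin.ext (cfrank_inj d.2 (by omega) (hd.trans e0.symm))

lemma cf_card_S (n : ℕ) :
    Nat.card {p : Fin (2*n+1) → ℤ //
        (∀ i, p i = 1 ∨ p i = -1) ∧ (univ.filter (fun i => p i = 1)).card = n + 1}
      = Nat.choose (2*n+1) (n+1) := by
  classical
  have e : {p : Fin (2*n+1) → ℤ //
        (∀ i, p i = 1 ∨ p i = -1) ∧ (univ.filter (fun i => p i = 1)).card = n + 1}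
      ≃ {s : Finset (Fin (2*n+1)) // s.card = n + 1} := by
    refine ⟨fun q => ⟨univ.filter (fun i => q.1 i = 1), q.2.2⟩,
      fun s => ⟨fun i => if i ∈ s.1 then 1 else -1, fun i => by by_cases h : i ∈ s.1 <;> simp [h],
        ?_⟩, ?_, ?_⟩
    · have : univ.filter (fun i => (if i ∈ s.1 then (1:ℤ) else -1) = 1) = s.1 := by
        ext i
        by_cases h : i ∈ s.1 <;> simp [h]
      rw [this, s.2]
    · intro q
      apply Subtype.ext
      funext i
      by_cases h : q.1 i = 1
      · simp [h]
      · have : q.1 i = -1 := (q.2.1 i).resolve_left h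
        simp [h, this]
    · intro s
      apply Subtype.ext
      dsimp only
      ext i
      by_cases h : i ∈ s.1 <;> simp [h]
  rw [Nat.card_congr e, Nat.card_eq_fintype_card, Fintype.card_finset_len, Fintype.card_fin]

/-- Among paths in 𝒫(n,1,1), for each `1 ≤ k ≤ 2n+1` the number of paths with
exactly `k` of the vertices `s_0, …, s_{2n}` on or below the x-axis is
`(1/(2n+1))·C(2n+1,n)`. -/
theorem catalan_chung_feller_vertices (n k : ℕ) (hk1 : 1 ≤ k) (hk2 : k ≤ 2*n + 1) :
    Nat.card {p : Fin (2*n+1) → ℤ //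
      (∀ i, p i = 1 ∨ p i = -1) ∧
      (univ.filter (fun i => p i = 1)).card = n + 1 ∧
      (((Finset.range (2*n+1)).filter (fun m => psum p m ≤ 0)).card = k) }
      * (2*n + 1) = Nat.choose (2*n+1) n := by

  classical
  set A := {p : Fin (2*n+1) → ℤ //
      (∀ i, p i = 1 ∨ p i = -1) ∧
      (univ.filter (fun i => p i = 1)).card = n + 1 ∧
      (((Finset.range (2*n+1)).filter (fun m => psum p m ≤ 0)).card = k) } with hA
  set S := {p : Fin (2*n+1) → ℤ //
      (∀ i, p i = 1 ∨ p i = -1) ∧ (univ.filter (fun i => p i = 1)).card = n + 1} with hS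
  set Φ : A × Fin (2*n+1) → S := fun x =>
    ⟨cfrot n x.2 x.1.1, cfrot_pm x.1.2.1 x.2, cfrot_card x.1.2.2.1 x.2⟩ with hΦ
  have hinj : Function.Injective Φ := by
    rintro ⟨⟨q, hq1, hq2, hq3⟩, c⟩ ⟨⟨q', hq1', hq2', hq3'⟩, c'⟩ h
    have heq : cfrot n c q = cfrot n c' q' := congrArg Subtype.val h
    have hq'eq : q' = cfrot n (-c' + c) q := by
      have := congrArg (cfrot n (-c')) heq
      rw [cfrot_cfrot, cfrot_cfrot, neg_add_cancel, cfrot_zero] at this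
      exact this.symm
    have hzero : -c' + c = 0 := by
      apply cf_unique_shift hq1 hq2 hq3
      rw [← hq'eq]
      exact hq3'
    have hcc : c = c' := by
      have : c' + (-c' + c) = c' + 0 := congrArg (c' + ·) hzero
      rwa [add_zero, ← add_assoc, add_neg_cancel, zero_add] at this
    subst hcc
    have hqq : q = q' := by
      have := congrArg (cfrot n (-c)) heq
      rwa [cfrot_cfrot, cfrot_cfrot, neg_add_cancel, cfrot_zero, cfrot_zero] at this
    subst hqq
    rfl
  have hsurj : Function.Surjective Φ := by
    rintro ⟨p, hp1, hp2⟩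
    have hs := cf_sum_eq_one hp1 hp2
    obtain ⟨c, hc, hrank⟩ := cfrank_surj (cft n p) (2*n+1) k hk1 hk2
    set cF : Fin (2*n+1) := ⟨c, hc⟩ with hcF
    have hstat : ((range (2*n+1)).filter (fun m => psum (cfrot n cF p) m ≤ 0)).card = k := by
      rw [stat_rot hs]; exact hrank
    refine ⟨⟨⟨cfrot n cF p, cfrot_pm hp1 cF, cfrot_card hp2 cF, hstat⟩, -cF⟩, ?_⟩
    apply Subtype.ext
    show cfrot n (-cF) (cfrot n cF p) = p
    rw [cfrot_cfrot, neg_add_cancel, cfrot_zero]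
  have hcard := Nat.card_congr (Equiv.ofBijective Φ ⟨hinj, hsurj⟩)
  rw [Nat.card_prod, Nat.card_eq_fintype_card (α := Fin (2*n+1)), Fintype.card_fin] at hcard
  rw [hcard, hS, cf_card_S]
  have hsym := Nat.choose_symm (show n+1 ≤ 2*n+1 by omega)
  have hsub : 2*n+1 - (n+1) = n := by omega
  rw [hsub] at hsym
  exact hsym.symm ▸ rfl
end

section
/- Let k ≥ 0 and l ≥ 0. For each i with 1 ≤ i ≤ k+1, the number of paths q in 𝒬(k,l,1) with q_1 = +1 such that exactly i up steps of q start on or below the x-axis equals (1/(k+1))·C(2k+l,2k)·C(2k,k). -/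
open Finset

namespace MSCF

lemma psum_zero {N : ℕ} (p : Fin N → ℤ) : psum p 0 = 0 := by
  simp [psum]

lemma psum_succ {N : ℕ} (p : Fin N → ℤ) (t : ℕ) (ht : t < N) :
    psum p (t+1) = psum p t + p ⟨t, ht⟩ := by
  unfold psum
  rw [show (univ.filter (fun j : Fin N => (j : ℕ) < t + 1))
      = insert ⟨t, ht⟩ (univ.filter (fun j : Fin N => (j : ℕ) < t)) by
    ext j
    simp only [mem_insert, mem_filter, mem_univ, true_and, Fin.ext_iff]
    omega]
  rw [Finset.sum_insert (by simp)]
  ring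

lemma psum_univ {N : ℕ} (p : Fin N → ℤ) : psum p N = ∑ j, p j := by
  unfold psum
  congr 1
  ext j
  simp [j.isLt]

lemma key_lex (N : ℕ) (a b : ℤ) (x y : ℕ) (hx : x ≤ N) (hy : y ≤ N) :
    ((N+1:ℤ)*a + x ≤ (N+1)*b + y) ↔ (a < b ∨ (a = b ∧ x ≤ y)) := by
  rcases lt_trichotomy a b with h | h | h
  · simp only [h, true_or, iff_true]
    have : a + 1 ≤ b := h
    nlinarith [Int.ofNat_nonneg x, Int.ofNat_nonneg y]
  · subst h
    constructor
    · intro h'; right; exact ⟨rfl, by exact_mod_cast le_of_add_le_add_left h'⟩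
    · rintro (h' | ⟨-, h'⟩); · exact absurd h' (lt_irrefl a)
      have : (x:ℤ) ≤ y := by exact_mod_cast h'
      linarith
  · constructor
    · intro h'
      exfalso
      have : b + 1 ≤ a := h
      nlinarith [Int.ofNat_nonneg x, Int.ofNat_nonneg y]
    · rintro (h' | ⟨h', -⟩) <;> omega


def rot {N : ℕ} [NeZero N] (m : Fin N) (q : Fin N → ℤ) : Fin N → ℤ := fun j => q (m + j)

lemma psum_rot {N : ℕ} [NeZero N] (w : Fin N → ℤ) (hsum : ∑ j, w j = 1)
    (m : Fin N) (t : ℕ) (ht : t ≤ N) :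
    psum (rot m w) t =
      if (m : ℕ) + t ≤ N then psum w ((m : ℕ) + t) - psum w (m : ℕ)
      else 1 - psum w (m : ℕ) + psum w ((m : ℕ) + t - N) := by
  induction t with
  | zero =>
    simp [psum_zero, Nat.le_of_lt m.isLt]
  | succ t ih =>
    have ht' : t ≤ N := Nat.le_of_succ_le ht
    have hmN : (m : ℕ) < N := m.isLt
    rw [psum_succ _ t (lt_of_lt_of_le (Nat.lt_succ_self t) ht), ih ht']
    have hval : ((m + ⟨t, lt_of_lt_of_le (Nat.lt_succ_self t) ht⟩ : Fin N) : ℕ)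
        = ((m : ℕ) + t) % N := by
      simp [Fin.add_def]
    have hrot : rot m w ⟨t, lt_of_lt_of_le (Nat.lt_succ_self t) ht⟩
        = w (m + ⟨t, lt_of_lt_of_le (Nat.lt_succ_self t) ht⟩) := rfl
    by_cases h1 : (m : ℕ) + (t+1) ≤ N
    · have h2 : (m : ℕ) + t ≤ N := by omega
      have h3 : (m : ℕ) + t < N := by omega
      rw [if_pos h1, if_pos h2, hrot]
      have : (m + (⟨t, lt_of_lt_of_le (Nat.lt_succ_self t) ht⟩ : Fin N))
          = ⟨(m : ℕ) + t, h3⟩ := by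
        apply Fin.ext
        rw [hval]
        exact Nat.mod_eq_of_lt h3
      rw [this, show (m:ℕ) + (t+1) = ((m:ℕ)+t)+1 by ring, psum_succ w _ h3]
      ring
    · rw [if_neg h1, hrot]
      by_cases h2 : (m : ℕ) + t ≤ N
      · -- m + t = N exactly
        have hN : (m : ℕ) + t = N := by omega
        have h0 : 0 < N := Nat.pos_of_ne_zero (NeZero.ne N)
        rw [if_pos h2]
        have : (m + (⟨t, lt_of_lt_of_le (Nat.lt_succ_self t) ht⟩ : Fin N))
            = ⟨0, h0⟩ := by
          apply Fin.ext
          rw [hval, hN]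
          simp
        rw [this, hN, psum_univ, hsum]
        rw [show (m:ℕ) + (t+1) - N = 0 + 1 by omega, psum_succ w 0 h0, psum_zero]
        ring
      · have h3 : (m : ℕ) + t - N < N := by omega
        rw [if_neg h2]
        have : (m + (⟨t, lt_of_lt_of_le (Nat.lt_succ_self t) ht⟩ : Fin N))
            = ⟨(m : ℕ) + t - N, h3⟩ := by
          apply Fin.ext
          rw [hval]
          conv_lhs => rw [show (m:ℕ) + t = ((m:ℕ) + t - N) + 1 * N by omega]
          rw [Nat.add_mul_mod_self_right, Nat.mod_eq_of_lt h3]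
        rw [this, show (m:ℕ) + (t+1) - N = ((m:ℕ)+t-N)+1 by omega, psum_succ w _ h3]
        ring


def stat {N : ℕ} (q : Fin N → ℤ) : ℕ :=
  (univ.filter (fun m : Fin N => q m = 1 ∧ psum q (m : ℕ) ≤ 0)).card

def key {N : ℕ} (w : Fin N → ℤ) (p : Fin N) : ℤ :=
  ((N:ℤ)+1) * psum w (p : ℕ) + ((N - (p : ℕ) : ℕ) : ℤ)

lemma psum_rot_le {N : ℕ} [NeZero N] (w : Fin N → ℤ) (hsum : ∑ j, w j = 1)
    (m j : Fin N) :
    psum (rot m w) (j : ℕ) ≤ 0 ↔ key w (m + j) ≤ key w m := by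
  have hj : (j : ℕ) ≤ N := Nat.le_of_lt j.isLt
  have hm : (m : ℕ) < N := m.isLt
  have hvadd : ((m + j : Fin N) : ℕ) = ((m : ℕ) + (j : ℕ)) % N := by
    simp [Fin.add_def]
  have hkey : ∀ p q : Fin N, (key w p ≤ key w q ↔
      (psum w (p:ℕ) < psum w (q:ℕ) ∨
       (psum w (p:ℕ) = psum w (q:ℕ) ∧ N - (p:ℕ) ≤ N - (q:ℕ)))) := by
    intro p q
    unfold key
    rw [key_lex N _ _ _ _ (Nat.sub_le _ _) (Nat.sub_le _ _)]
  rw [psum_rot w hsum m (j : ℕ) hj, hkey]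
  by_cases hc : (m : ℕ) + (j : ℕ) < N
  · have hpv : ((m + j : Fin N) : ℕ) = (m : ℕ) + (j : ℕ) := by
      rw [hvadd, Nat.mod_eq_of_lt hc]
    rw [if_pos (Nat.le_of_lt hc), hpv]
    constructor
    · intro h
      rcases lt_or_eq_of_le (by linarith : psum w ((m:ℕ)+(j:ℕ)) ≤ psum w (m:ℕ)) with h' | h'
      · exact Or.inl h'
      · exact Or.inr ⟨h', by omega⟩
    · rintro (h | ⟨h, -⟩) <;> linarith
  · have hge : N ≤ (m : ℕ) + (j : ℕ) := le_of_not_gt hc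
    have hm1 : 1 ≤ (m : ℕ) := by omega
    have hpv : ((m + j : Fin N) : ℕ) = (m : ℕ) + (j : ℕ) - N := by
      rw [hvadd]
      conv_lhs => rw [show (m:ℕ) + (j:ℕ) = ((m:ℕ) + (j:ℕ) - N) + 1 * N by omega]
      rw [Nat.add_mul_mod_self_right, Nat.mod_eq_of_lt (by omega)]
    have hplt : ((m + j : Fin N) : ℕ) < (m : ℕ) := by omega
    have heval : (if (m : ℕ) + (j:ℕ) ≤ N then psum w ((m : ℕ) + (j:ℕ)) - psum w (m : ℕ)
        else 1 - psum w (m : ℕ) + psum w ((m : ℕ) + (j:ℕ) - N))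
        = 1 - psum w (m:ℕ) + psum w ((m + j : Fin N) : ℕ) := by
      rw [hpv]
      by_cases he : (m : ℕ) + (j:ℕ) ≤ N
      · have hN : (m:ℕ) + (j:ℕ) = N := by omega
        rw [if_pos he, hN, psum_univ, hsum, show N - N = 0 by omega, psum_zero]
        ring
      · rw [if_neg he]
    rw [heval]
    constructor
    · intro h
      exact Or.inl (by linarith)
    · rintro (h | ⟨-, h⟩)
      · linarith
      · omega

lemma stat_rot {N : ℕ} [NeZero N] (w : Fin N → ℤ) (hsum : ∑ j, w j = 1) (m : Fin N) :
    stat (rot m w) = (univ.filter (fun p => w p = 1 ∧ key w p ≤ key w m)).card := by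
  unfold stat
  apply Finset.card_bij' (fun j _ => m + j) (fun p _ => p - m)
  · intro j hj
    rw [mem_filter] at hj ⊢
    refine ⟨mem_univ _, hj.2.1, ?_⟩
    rw [← psum_rot_le w hsum m j]
    exact hj.2.2
  · intro p hp
    rw [mem_filter] at hp ⊢
    refine ⟨mem_univ _, ?_, ?_⟩
    · show w (m + (p - m)) = 1
      rw [add_sub_cancel]
      exact hp.2.1
    · rw [psum_rot_le w hsum m (p - m), add_sub_cancel]
      exact hp.2.2
  · intro j _; exact add_sub_cancel_left m j
  · intro p _; exact add_sub_cancel m p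

lemma rank_card_one {α : Type*} [DecidableEq α] (U : Finset α) (key : α → ℤ)
    (hinj : ∀ a ∈ U, ∀ b ∈ U, key a = key b → a = b) (i : ℕ) (h1 : 1 ≤ i)
    (h2 : i ≤ U.card) :
    (U.filter (fun m => (U.filter (fun p => key p ≤ key m)).card = i)).card = 1 := by
  classical
  set f : α → ℕ := fun m => (U.filter (fun p => key p ≤ key m)).card with hf
  have hmono : ∀ a ∈ U, ∀ b ∈ U, key a < key b → f a < f b := by
    intro a ha b hb hab
    apply Finset.card_lt_card
    constructor
    · intro p hp
      rw [mem_filter] at hp ⊢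
      exact ⟨hp.1, le_of_lt (lt_of_le_of_lt hp.2 hab)⟩
    · intro hsub
      have : b ∈ U.filter (fun p => key p ≤ key b) := by
        rw [mem_filter]; exact ⟨hb, le_refl _⟩
      have := hsub this
      rw [mem_filter] at this
      exact absurd this.2 (not_le_of_gt hab)
  have finj : ∀ a ∈ U, ∀ b ∈ U, f a = f b → a = b := by
    intro a ha b hb hab
    rcases lt_trichotomy (key a) (key b) with h | h | h
    · exact absurd hab (Nat.ne_of_lt (hmono a ha b hb h))
    · exact hinj a ha b hb h
    · exact absurd hab.symm (Nat.ne_of_lt (hmono b hb a ha h))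
  have himg : U.image f ⊆ Finset.Icc 1 U.card := by
    intro x hx
    rw [mem_image] at hx
    obtain ⟨m, hm, rfl⟩ := hx
    rw [Finset.mem_Icc]
    constructor
    · have : m ∈ U.filter (fun p => key p ≤ key m) := by
        rw [mem_filter]; exact ⟨hm, le_refl _⟩
      exact Finset.card_pos.mpr ⟨m, this⟩
    · exact Finset.card_le_card (filter_subset _ _)
  have hcard : (U.image f).card = U.card := Finset.card_image_of_injOn finj
  have heq : U.image f = Finset.Icc 1 U.card := by
    apply Finset.eq_of_subset_of_card_le himg
    rw [hcard, Nat.card_Icc]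
    omega
  have hi : i ∈ U.image f := by
    rw [heq, Finset.mem_Icc]; exact ⟨h1, h2⟩
  rw [mem_image] at hi
  obtain ⟨m, hm, hfm⟩ := hi
  rw [Finset.card_eq_one]
  refine ⟨m, ?_⟩
  ext a
  rw [mem_filter, Finset.mem_singleton]
  constructor
  · rintro ⟨ha, hfa⟩
    have hfa' : f a = i := hfa
    exact finj a ha m hm (hfa'.trans hfm.symm)
  · rintro rfl
    exact ⟨hm, hfm⟩

lemma sum_eq_counts {N : ℕ} (w : Fin N → ℤ)
    (hr : ∀ m, w m = 1 ∨ w m = 0 ∨ w m = -1) :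
    ∑ j, w j = ((univ.filter (fun m => w m = 1)).card : ℤ)
      - ((univ.filter (fun m => w m = -1)).card : ℤ) := by
  classical
  rw [← Finset.sum_filter_add_sum_filter_not univ (fun m => w m = 1) w]
  have h1 : ∑ j ∈ univ.filter (fun m => w m = 1), w j
      = ((univ.filter (fun m => w m = 1)).card : ℤ) := by
    rw [Finset.sum_congr rfl (fun j hj => (mem_filter.mp hj).2)]
    simp
  rw [h1]
  rw [← Finset.sum_filter_add_sum_filter_not (univ.filter (fun m => ¬ w m = 1))
      (fun m => w m = -1) w]
  have h2 : (univ.filter (fun m => ¬ w m = 1)).filter (fun m => w m = -1)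
      = univ.filter (fun m => w m = -1) := by
    rw [Finset.filter_filter]
    apply Finset.filter_congr
    intro m _
    constructor
    · rintro ⟨-, h⟩; exact h
    · intro h; exact ⟨by rw [h]; decide, h⟩
  have h3 : ∑ j ∈ (univ.filter (fun m => ¬ w m = 1)).filter (fun m => w m = -1), w j
      = -(((univ.filter (fun m => w m = -1)).card : ℤ)) := by
    rw [h2, Finset.sum_congr rfl (fun j hj => (mem_filter.mp hj).2)]
    simp
  have h4 : ∑ j ∈ (univ.filter (fun m => ¬ w m = 1)).filter (fun m => ¬ w m = -1), w j
      = 0 := by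
    apply Finset.sum_eq_zero
    intro j hj
    simp only [mem_filter] at hj
    rcases hr j with h | h | h
    · exact absurd h hj.1.2
    · exact h
    · exact absurd h hj.2
  rw [h3, h4]
  ring


def gmap : Fin 3 → ℤ := ![1, 0, -1]

lemma gmap_eq_one : ∀ x : Fin 3, gmap x = 1 ↔ x = 0 := by decide
lemma gmap_eq_two : ∀ x : Fin 3, gmap x = -1 ↔ x = 2 := by decide
lemma gmap_range : ∀ x : Fin 3, gmap x = 1 ∨ gmap x = 0 ∨ gmap x = -1 := by decide

def ginv : ℤ → Fin 3 := fun z => if z = 1 then 0 else if z = 0 then 1 else 2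

lemma ginv_gmap : ∀ x : Fin 3, ginv (gmap x) = x := by decide

lemma gmap_ginv (z : ℤ) (hz : z = 1 ∨ z = 0 ∨ z = -1) : gmap (ginv z) = z := by
  rcases hz with rfl | rfl | rfl <;> decide

lemma natCard_eq {N : ℕ} (P : (Fin N → ℤ) → Prop)
    [DecidablePred (fun v : Fin N → Fin 3 => P (gmap ∘ v))]
    (hP : ∀ q, P q → ∀ m, q m = 1 ∨ q m = 0 ∨ q m = -1) :
    Nat.card {q : Fin N → ℤ // P q}
      = (univ.filter (fun v : Fin N → Fin 3 => P (gmap ∘ v))).card := by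
  have e : {v : Fin N → Fin 3 // P (gmap ∘ v)} ≃ {q : Fin N → ℤ // P q} :=
  { toFun := fun v => ⟨gmap ∘ v.1, v.2⟩
    invFun := fun q => ⟨ginv ∘ q.1, by
      have h : gmap ∘ (ginv ∘ q.1) = q.1 :=
        funext fun m => gmap_ginv (q.1 m) (hP q.1 q.2 m)
      rw [show gmap ∘ (ginv ∘ q.1) = q.1 from h]
      exact q.2⟩
    left_inv := fun v => Subtype.ext (funext fun m => ginv_gmap (v.1 m))
    right_inv := fun q => Subtype.ext (funext fun m => gmap_ginv (q.1 m) (hP q.1 q.2 m)) }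
  rw [← Nat.card_congr e, Nat.card_eq_fintype_card, Fintype.card_subtype]

lemma card_filter_addleft {N : ℕ} [NeZero N] (p : Fin N → Prop) [DecidablePred p]
    (m : Fin N) :
    (univ.filter (fun j => p (m + j))).card = (univ.filter p).card := by
  apply Finset.card_bij' (fun j _ => m + j) (fun j _ => j - m)
  · intro j hj; rw [mem_filter] at hj ⊢; exact ⟨mem_univ _, hj.2⟩
  · intro j hj; rw [mem_filter] at hj ⊢
    refine ⟨mem_univ _, ?_⟩
    show p (m + (j - m))
    rw [add_sub_cancel]
    exact hj.2
  · intro j _; exact add_sub_cancel_left m j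
  · intro j _; exact add_sub_cancel m j

lemma fin3_cases : ∀ x : Fin 3, x = 0 ∨ x = 1 ∨ x = 2 := by decide

lemma count_words (N a b : ℕ) :
    (univ.filter (fun v : Fin N → Fin 3 =>
       (univ.filter (fun m => gmap (v m) = 1)).card = a ∧
       (univ.filter (fun m => gmap (v m) = -1)).card = b)).card
    = N.choose a * (N - a).choose b := by
  classical
  have hbij : (univ.filter (fun v : Fin N → Fin 3 =>
       (univ.filter (fun m => gmap (v m) = 1)).card = a ∧
       (univ.filter (fun m => gmap (v m) = -1)).card = b)).card
      = (((univ : Finset (Fin N)).powersetCard a).sigma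
          (fun s => ((univ : Finset (Fin N)) \ s).powersetCard b)).card := by
    apply Finset.card_bij'
      (fun v _ => (⟨univ.filter (fun m => v m = 0), univ.filter (fun m => v m = 2)⟩ :
        Σ _ : Finset (Fin N), Finset (Fin N)))
      (fun p _ => fun j => if j ∈ p.1 then (0 : Fin 3) else if j ∈ p.2 then 2 else 1)
    · intro v hv
      rw [mem_filter] at hv
      obtain ⟨-, h1, h2⟩ := hv
      rw [Finset.mem_sigma, Finset.mem_powersetCard, Finset.mem_powersetCard]
      have e1 : univ.filter (fun m => v m = 0) = univ.filter (fun m => gmap (v m) = 1) := by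
        apply Finset.filter_congr; intro m _; exact (gmap_eq_one (v m)).symm
      have e2 : univ.filter (fun m => v m = 2) = univ.filter (fun m => gmap (v m) = -1) := by
        apply Finset.filter_congr; intro m _; exact (gmap_eq_two (v m)).symm
      refine ⟨⟨subset_univ _, by rw [e1]; exact h1⟩, ?_, by rw [e2]; exact h2⟩
      intro j hj
      rw [mem_filter] at hj
      rw [Finset.mem_sdiff, mem_filter]
      refine ⟨mem_univ _, ?_⟩
      rintro ⟨-, h0⟩
      rw [hj.2] at h0
      exact absurd h0 (by decide)
    · intro p hp
      rw [Finset.mem_sigma, Finset.mem_powersetCard, Finset.mem_powersetCard] at hp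
      obtain ⟨⟨-, hs⟩, hts, ht⟩ := hp
      rw [mem_filter]
      refine ⟨mem_univ _, ?_, ?_⟩
      · have e1 : univ.filter (fun m => gmap (if m ∈ p.1 then (0:Fin 3) else if m ∈ p.2 then 2 else 1) = 1) = p.1 := by
          ext j
          rw [mem_filter]
          split_ifs with hj1 hj2 <;> simp_all (config := {decide := true})
        rw [e1]; exact hs
      · have e2 : univ.filter (fun m => gmap (if m ∈ p.1 then (0:Fin 3) else if m ∈ p.2 then 2 else 1) = -1) = p.2 := by
          ext j
          rw [mem_filter]
          split_ifs with hj1 hj2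
          · simp only [mem_univ, true_and]
            constructor
            · intro h; exact absurd h (by decide)
            · intro h
              have := hts h
              rw [Finset.mem_sdiff] at this
              exact absurd hj1 this.2
          · simp_all (config := {decide := true})
          · simp_all (config := {decide := true})
        rw [e2]; exact ht
    · intro v hv
      funext j
      rcases fin3_cases (v j) with h | h | h <;> simp [h]
    · intro p hp
      rw [Finset.mem_sigma, Finset.mem_powersetCard, Finset.mem_powersetCard] at hp
      obtain ⟨⟨-, -⟩, hts, -⟩ := hp
      obtain ⟨s, t⟩ := p
      simp only [Sigma.mk.inj_iff, heq_eq_eq]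
      constructor
      · ext j
        rw [mem_filter]
        split_ifs with hj1 hj2 <;> simp_all (config := {decide := true})
      · ext j
        rw [mem_filter]
        split_ifs with hj1 hj2
        · simp only [mem_univ, true_and]
          constructor
          · intro h; exact absurd h (by decide)
          · intro h
            have := hts h
            rw [Finset.mem_sdiff] at this
            exact absurd hj1 this.2
        · simp_all (config := {decide := true})
        · simp_all (config := {decide := true})
  rw [hbij, Finset.card_sigma]
  have hterm : ∀ s ∈ (univ : Finset (Fin N)).powersetCard a,
      (((univ : Finset (Fin N)) \ s).powersetCard b).card = (N - a).choose b := by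
    intro s hs
    rw [Finset.mem_powersetCard] at hs
    rw [Finset.card_powersetCard, Finset.card_sdiff_of_subset hs.1, hs.2, card_univ, Fintype.card_fin]
  rw [Finset.sum_congr rfl hterm, Finset.sum_const, Finset.card_powersetCard, card_univ,
    Fintype.card_fin, smul_eq_mul]


def rotF {N : ℕ} [NeZero N] (m : Fin N) (v : Fin N → Fin 3) : Fin N → Fin 3 :=
  fun j => v (m + j)

lemma rotF_sub {N : ℕ} [NeZero N] (m : Fin N) (q : Fin N → Fin 3) :
    rotF m (fun j => q (j - m)) = q :=
  funext fun j => by show q (m + j - m) = q j; rw [add_sub_cancel_left]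

lemma rotF_sub' {N : ℕ} [NeZero N] (m : Fin N) (v : Fin N → Fin 3) :
    (fun j => rotF m v (j - m)) = v :=
  funext fun j => by show v (m + (j - m)) = v j; rw [add_sub_cancel]

lemma card_filter_subright {N : ℕ} [NeZero N] (p : Fin N → Prop) [DecidablePred p]
    (m : Fin N) :
    (univ.filter (fun j => p (j - m))).card = (univ.filter p).card := by
  simp only [sub_eq_neg_add]
  exact card_filter_addleft p (-m)

lemma key_inj {N : ℕ} (w : Fin N → ℤ) (a b : Fin N) (h : key w a = key w b) : a = b := by
  have h1 := (key_lex N (psum w (a:ℕ)) (psum w (b:ℕ)) (N - (a:ℕ)) (N - (b:ℕ))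
    (Nat.sub_le _ _) (Nat.sub_le _ _)).mp (le_of_eq h)
  have h2 := (key_lex N (psum w (b:ℕ)) (psum w (a:ℕ)) (N - (b:ℕ)) (N - (a:ℕ))
    (Nat.sub_le _ _) (Nat.sub_le _ _)).mp (le_of_eq h.symm)
  have ha := a.isLt
  have hb := b.isLt
  apply Fin.ext
  rcases h1 with h1 | ⟨h1e, h1⟩ <;> rcases h2 with h2 | ⟨h2e, h2⟩ <;> omega

lemma mk_zero_eq (n : ℕ) : (⟨0, Nat.succ_pos n⟩ : Fin (n+1)) = 0 := by
  apply Fin.ext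
  simp

end MSCF

open MSCF

/-- Among paths in 𝒬(k,l,1) (steps +1, 0, −1 with k+1 up steps, k down steps and
l flat steps) starting with an up step, for each `1 ≤ i ≤ k+1` the number with
exactly `i` up steps starting on or below the x-axis is `(1/(k+1))·C(2k+l,2k)·C(2k,k)`. -/
theorem motzkin_schroeder_chung_feller_up (k l : ℕ) (i : ℕ) (hi1 : 1 ≤ i) (hi2 : i ≤ k + 1) :
    Nat.card {q : Fin (2*k+l+1) → ℤ //
      (∀ m, q m = 1 ∨ q m = 0 ∨ q m = -1) ∧
      (univ.filter (fun m => q m = 1)).card = k + 1 ∧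
      (univ.filter (fun m => q m = -1)).card = k ∧
      q ⟨0, Nat.succ_pos _⟩ = 1 ∧
      (univ.filter (fun m : Fin (2*k+l+1) => q m = 1 ∧ psum q (m : ℕ) ≤ 0)).card = i }
      * (k + 1) = Nat.choose (2*k+l) (2*k) * Nat.choose (2*k) k := by
  have hcard := MSCF.natCard_eq (N := 2*k+l+1)
    (fun q => (∀ m, q m = 1 ∨ q m = 0 ∨ q m = -1) ∧
      (univ.filter (fun m => q m = 1)).card = k + 1 ∧
      (univ.filter (fun m => q m = -1)).card = k ∧
      q ⟨0, Nat.succ_pos _⟩ = 1 ∧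
      (univ.filter (fun m : Fin (2*k+l+1) => q m = 1 ∧ psum q (m : ℕ) ≤ 0)).card = i)
    (fun q hq => hq.1)
  rw [hcard]
  set A : Finset (Fin (2*k+l+1) → Fin 3) := univ.filter (fun v =>
      (∀ m, (gmap ∘ v) m = 1 ∨ (gmap ∘ v) m = 0 ∨ (gmap ∘ v) m = -1) ∧
      (univ.filter (fun m => (gmap ∘ v) m = 1)).card = k + 1 ∧
      (univ.filter (fun m => (gmap ∘ v) m = -1)).card = k ∧
      (gmap ∘ v) ⟨0, Nat.succ_pos _⟩ = 1 ∧
      (univ.filter (fun m : Fin (2*k+l+1) =>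
        (gmap ∘ v) m = 1 ∧ psum (gmap ∘ v) (m : ℕ) ≤ 0)).card = i) with hA
  set W : Finset (Fin (2*k+l+1) → Fin 3) := univ.filter (fun v =>
      (univ.filter (fun m => gmap (v m) = 1)).card = k + 1 ∧
      (univ.filter (fun m => gmap (v m) = -1)).card = k) with hW
  clear_value A W
  have hsum1 : ∀ v ∈ W, ∑ j, gmap (v j) = 1 := by
    intro v hv
    rw [hW, mem_filter] at hv
    rw [MSCF.sum_eq_counts (fun j => gmap (v j)) (fun m => gmap_range (v m)), hv.2.1, hv.2.2]
    push_cast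
    ring
  have hdouble : A.card * (2*k+l+1) = W.card := by
    have hsig : (W.sigma (fun v => univ.filter (fun m : Fin (2*k+l+1) =>
        gmap (v m) = 1 ∧ stat (rot m (fun j => gmap (v j))) = i))).card = W.card := by
      rw [Finset.card_sigma]
      rw [Finset.sum_congr rfl (fun v hv => ?_), Finset.sum_const, smul_eq_mul, mul_one]
      have hWv := hv
      rw [hW, mem_filter] at hWv
      have hU : (univ.filter (fun m => gmap (v m) = 1)).card = k + 1 := hWv.2.1
      have hinner : univ.filter (fun m : Fin (2*k+l+1) =>
          gmap (v m) = 1 ∧ stat (rot m (fun j => gmap (v j))) = i)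
          = (univ.filter (fun m => gmap (v m) = 1)).filter (fun m =>
              ((univ.filter (fun m => gmap (v m) = 1)).filter
                (fun p => key (fun j => gmap (v j)) p ≤ key (fun j => gmap (v j)) m)).card = i) := by
        rw [Finset.filter_filter]
        apply Finset.filter_congr
        intro m _
        constructor
        · rintro ⟨h1, h2⟩
          refine ⟨h1, ?_⟩
          rw [MSCF.stat_rot (fun j => gmap (v j)) (hsum1 v hv) m] at h2
          rw [← h2]
          congr 1
          rw [Finset.filter_filter]
        · rintro ⟨h1, h2⟩
          refine ⟨h1, ?_⟩
          rw [MSCF.stat_rot (fun j => gmap (v j)) (hsum1 v hv) m, ← h2]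
          congr 1
          rw [Finset.filter_filter]
      rw [hinner]
      exact MSCF.rank_card_one _ _ (fun a _ b _ h => MSCF.key_inj _ a b h) i hi1
        (by rw [hU]; exact hi2)
    rw [← hsig]
    have hbij : (W.sigma (fun v => univ.filter (fun m : Fin (2*k+l+1) =>
        gmap (v m) = 1 ∧ stat (rot m (fun j => gmap (v j))) = i))).card
        = (A ×ˢ (univ : Finset (Fin (2*k+l+1)))).card := by
      apply Finset.card_bij' (fun x _ => (rotF x.2 x.1, x.2))
        (fun p _ => (⟨fun j => p.1 (j - p.2), p.2⟩ : Σ _ : Fin (2*k+l+1) → Fin 3, Fin (2*k+l+1)))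
      · rintro ⟨v, m⟩ hx
        rw [Finset.mem_sigma] at hx
        obtain ⟨hvW, hm⟩ := hx
        rw [mem_filter] at hm
        obtain ⟨-, hm1, hmstat⟩ := hm
        rw [hW, mem_filter] at hvW
        rw [Finset.mem_product]
        refine ⟨?_, mem_univ _⟩
        rw [hA, mem_filter]
        refine ⟨mem_univ _, fun m' => gmap_range _, ?_, ?_, ?_, ?_⟩
        · exact (MSCF.card_filter_addleft (fun j => gmap (v j) = 1) m).trans hvW.2.1
        · exact (MSCF.card_filter_addleft (fun j => gmap (v j) = -1) m).trans hvW.2.2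
        · show gmap (v (m + ⟨0, Nat.succ_pos _⟩)) = 1
          rw [MSCF.mk_zero_eq, add_zero]
          exact hm1
        · exact hmstat
      · rintro ⟨q, m⟩ hp
        rw [Finset.mem_product] at hp
        have hqA := hp.1
        rw [hA, mem_filter] at hqA
        obtain ⟨-, -, h1, h2, h0, hst⟩ := hqA
        rw [Finset.mem_sigma]
        constructor
        · rw [hW, mem_filter]
          refine ⟨mem_univ _, ?_, ?_⟩
          · exact (MSCF.card_filter_subright (fun j => gmap (q j) = 1) m).trans h1
          · exact (MSCF.card_filter_subright (fun j => gmap (q j) = -1) m).trans h2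
        · rw [mem_filter]
          refine ⟨mem_univ _, ?_, ?_⟩
          · show gmap (q (m - m)) = 1
            rw [sub_self, ← MSCF.mk_zero_eq (2*k+l)]
            exact h0
          · show stat (fun j => gmap ((rotF m (fun j' => q (j' - m))) j)) = i
            rw [MSCF.rotF_sub]
            exact hst
      · rintro ⟨v, m⟩ _
        show (⟨fun j => rotF m v (j - m), m⟩ : Σ _ : Fin (2*k+l+1) → Fin 3, Fin (2*k+l+1))
          = ⟨v, m⟩
        rw [MSCF.rotF_sub']
      · rintro ⟨q, m⟩ _
        show (rotF m (fun j => q (j - m)), m) = (q, m)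
        rw [MSCF.rotF_sub]
    rw [hbij, Finset.card_product, card_univ, Fintype.card_fin]
  have hWcount : W.card = (2*k+l+1).choose (k+1) * (k+l).choose k := by
    clear hcard hA hsum1 hdouble
    rw [hW, MSCF.count_words (2*k+l+1) (k+1) k, show 2*k+l+1-(k+1) = k+l by omega]
  -- arithmetic conclusion
  have hX : A.card * (2*k+l+1) = (2*k+l+1).choose (k+1) * (k+l).choose k := by
    rw [hdouble, hWcount]
  clear hcard hA hW hsum1 hdouble hWcount
  have e1 : (k+l).choose k * k.factorial * l.factorial = (k+l).factorial := by
    have h := Nat.choose_mul_factorial_mul_factorial (show k ≤ k+l by omega)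
    rwa [show k+l-k = l by omega] at h
  have e2 : (2*k+l+1).choose (k+1) * (k+1).factorial * (k+l).factorial
      = (2*k+l+1).factorial := by
    have h := Nat.choose_mul_factorial_mul_factorial (show k+1 ≤ 2*k+l+1 by omega)
    rwa [show 2*k+l+1-(k+1) = k+l by omega] at h
  have e3 : (2*k).choose k * k.factorial * k.factorial = (2*k).factorial := by
    have h := Nat.choose_mul_factorial_mul_factorial (show k ≤ 2*k by omega)
    rwa [show 2*k-k = k by omega] at h
  have e4 : (2*k+l).choose (2*k) * (2*k).factorial * l.factorial = (2*k+l).factorial := by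
    have h := Nat.choose_mul_factorial_mul_factorial (show 2*k ≤ 2*k+l by omega)
    rwa [show 2*k+l-2*k = l by omega] at h
  apply Nat.eq_of_mul_eq_mul_right
    (show 0 < (2*k+l+1) * (k.factorial * k.factorial * l.factorial) by positivity)
  calc A.card * (k+1) * ((2*k+l+1) * (k.factorial * k.factorial * l.factorial))
      = (A.card * (2*k+l+1)) * ((k+1) * k.factorial * k.factorial * l.factorial) := by ring
    _ = ((2*k+l+1).choose (k+1) * (k+l).choose k)
        * ((k+1) * k.factorial * k.factorial * l.factorial) := by rw [hX]
    _ = ((2*k+l+1).choose (k+1) * ((k+1) * k.factorial))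
        * ((k+l).choose k * k.factorial * l.factorial) := by ring
    _ = ((2*k+l+1).choose (k+1) * (k+1).factorial) * (k+l).factorial := by
        rw [Nat.factorial_succ, e1]
    _ = (2*k+l+1).factorial := e2
    _ = (2*k+l+1) * (2*k+l).factorial := Nat.factorial_succ _
    _ = (2*k+l+1) * ((2*k+l).choose (2*k) * (2*k).factorial * l.factorial) := by rw [e4]
    _ = (2*k+l+1) * ((2*k+l).choose (2*k) * ((2*k).choose k * k.factorial * k.factorial)
          * l.factorial) := by rw [e3]
    _ = (2*k+l).choose (2*k) * (2*k).choose k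
        * ((2*k+l+1) * (k.factorial * k.factorial * l.factorial)) := by ring
end
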